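/- arXiv:2412.11528 — 8 statements merged into one kernel-verified Lean document; each statement's English description precedes it below -/
import Mathlib

section
/- For every n ≥ 0, the number of compositions of n with all parts in {1,2} and zero water cells equals ⌊n²/4⌋ + 1. -/
/-- A composition of `n`: a list of positive integers summing to `n`. -/
def IsComposition (n : ℕ) (l : List ℕ) : Prop :=
  (∀ x ∈ l, 0 < x) ∧ l.sum = n

/-- All parts of the list lie in {1, 2}. -/
def Parts12 (l : List ℕ) : Prop := ∀ x ∈ l, x = 1 ∨ x = 2

/-- Number of water cells: parts equal to 1 with a part 2 strictly before
and a part 2 strictly after. -/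
noncomputable def waterCells (l : List ℕ) : ℕ :=
  {i : Fin l.length | l.get i = 1 ∧ (∃ j : Fin l.length, j < i ∧ l.get j = 2) ∧
    (∃ j : Fin l.length, i < j ∧ l.get j = 2)}.ncard

/-- `w n k`: number of compositions of `n` with parts in {1,2} and exactly `k` water cells. -/
noncomputable def w (n k : ℕ) : ℕ :=
  {l : List ℕ | Parts12 l ∧ l.sum = n ∧ waterCells l = k}.ncard

/-- Diagonal sums of the water-cell array. -/
noncomputable def d (n : ℕ) : ℕ := ∑ k ∈ Finset.range (n + 1), w (n - k) k

/-- All internal parts (other than the first and last) are even. -/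
def InternalEven (l : List ℕ) : Prop := ∀ x ∈ (l.drop 1).dropLast, Even x

namespace Stmt2Aux

open List

/-- canonical list -/
def L (a b c : ℕ) : List ℕ := replicate a 1 ++ replicate b 2 ++ replicate c 1

lemma L_length (a b c : ℕ) : (L a b c).length = a + b + c := by simp [L]; omega

lemma L_get (a b c i : ℕ) (h : i < (L a b c).length) :
    (L a b c)[i] = if i < a then 1 else if i < a + b then 2 else 1 := by
  unfold L at h ⊢
  simp only [List.getElem_append, List.getElem_replicate, List.length_replicate,
    List.length_append] at h ⊢
  split_ifs <;> omega

lemma L_sum (a b c : ℕ) : (L a b c).sum = a + 2 * b + c := by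
  simp [L, List.sum_replicate]; ring

lemma L_parts12 (a b c : ℕ) : Parts12 (L a b c) := by
  intro x hx
  simp only [L, List.mem_append, List.mem_replicate] at hx
  rcases hx with (⟨_, rfl⟩ | ⟨_, rfl⟩) | ⟨_, rfl⟩ <;> simp

lemma water_zero_iff (l : List ℕ) : waterCells l = 0 ↔
    ∀ i : Fin l.length, ¬(l.get i = 1 ∧ (∃ j : Fin l.length, j < i ∧ l.get j = 2) ∧
      (∃ j : Fin l.length, i < j ∧ l.get j = 2)) := by
  unfold waterCells
  rw [Set.ncard_eq_zero (Set.toFinite _), Set.eq_empty_iff_forall_notMem]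
  rfl

lemma L_water (a b c : ℕ) : waterCells (L a b c) = 0 := by
  rw [water_zero_iff]
  rintro i ⟨h1, ⟨j, hji, hj2⟩, ⟨k, hik, hk2⟩⟩
  simp only [List.get_eq_getElem] at h1 hj2 hk2
  rw [L_get a b c _ i.isLt] at h1
  rw [L_get a b c _ j.isLt] at hj2
  rw [L_get a b c _ k.isLt] at hk2
  have hk : (k : ℕ) < a + b + c := by
    have := k.isLt; simp only [L_length] at this; exact this
  have hji' : (j : ℕ) < (i : ℕ) := hji
  have hik' : (i : ℕ) < (k : ℕ) := hik
  split_ifs at h1 hj2 hk2 <;> omega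

lemma no212_of_water_zero {l : List ℕ} (h : waterCells l = 0) : ¬ ([2, 1, 2] <+ l) := by
  intro hs
  obtain ⟨is, his, hp⟩ := List.sublist_eq_map_getElem hs
  have hlen : is.length = 3 := by
    have := congrArg List.length his
    simpa using this.symm
  obtain ⟨j, i, k, rfl⟩ : ∃ j i k, is = [j, i, k] := by
    match is, hlen with
    | [j, i, k], _ => exact ⟨j, i, k, rfl⟩
  · simp only [List.map_cons, List.map_nil, List.cons.injEq, and_true] at his
    obtain ⟨hj2, hi1, hk2⟩ := his
    rw [List.pairwise_cons, List.pairwise_cons] at hp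
    have hji : j < i := hp.1 i (by simp)
    have hik : i < k := hp.2.1 k (by simp)
    rw [water_zero_iff] at h
    refine h i ⟨?_, ⟨j, hji, ?_⟩, ⟨k, hik, ?_⟩⟩
    · exact hi1.symm
    · exact hj2.symm
    · exact hk2.symm

lemma struct2 (l : List ℕ) (h12 : Parts12 l) (h : ¬ ([1, 2] <+ l)) :
    ∃ b c, l = replicate b 2 ++ replicate c 1 := by
  induction l with
  | nil => exact ⟨0, 0, rfl⟩
  | cons x t ih =>
    rcases h12 x List.mem_cons_self with rfl | rfl
    · refine ⟨0, t.length + 1, ?_⟩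
      have hall : ∀ y ∈ t, y = 1 := by
        intro y hy
        rcases h12 y (List.mem_cons_of_mem _ hy) with rfl | rfl
        · rfl
        · exact absurd ((List.singleton_sublist.mpr hy).cons₂ 1) h
      have ht : t = replicate t.length 1 := List.eq_replicate_iff.mpr ⟨rfl, hall⟩
      rw [List.replicate_zero, List.nil_append, List.replicate_succ, ← ht]
    · obtain ⟨b, c, rfl⟩ := ih (fun y hy => h12 y (List.mem_cons_of_mem _ hy))
        (fun hh => h (hh.cons 2))
      exact ⟨b + 1, c, by simp [List.replicate_succ]⟩

lemma struct1 (l : List ℕ) (h12 : Parts12 l) (h : ¬ ([2, 1, 2] <+ l)) :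
    ∃ a b c, l = L a b c := by
  induction l with
  | nil => exact ⟨0, 0, 0, rfl⟩
  | cons x t ih =>
    rcases h12 x List.mem_cons_self with rfl | rfl
    · obtain ⟨a, b, c, rfl⟩ := ih (fun y hy => h12 y (List.mem_cons_of_mem _ hy))
        (fun hh => h (hh.cons 1))
      exact ⟨a + 1, b, c, by simp [L, List.replicate_succ]⟩
    · have h' : ¬ ([1, 2] <+ t) := fun hh => h (hh.cons₂ 2)
      obtain ⟨b, c, rfl⟩ := struct2 t (fun y hy => h12 y (List.mem_cons_of_mem _ hy)) h'
      exact ⟨0, b + 1, c, by simp [L, List.replicate_succ]⟩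

/-- the parameter finset: pairs (b, a) -/
def T (n : ℕ) : Finset (ℕ × ℕ) :=
  (Finset.range (n / 2 + 1)).biUnion
    (fun b => if b = 0 then {((0 : ℕ), n)} else {b} ×ˢ Finset.range (n - 2 * b + 1))

lemma mem_T {n : ℕ} {p : ℕ × ℕ} :
    p ∈ T n ↔ (p = (0, n)) ∨ (1 ≤ p.1 ∧ 2 * p.1 + p.2 ≤ n) := by
  unfold T
  rw [Finset.mem_biUnion]
  constructor
  · rintro ⟨b, hb, hp⟩
    rw [Finset.mem_range] at hb
    by_cases hb0 : b = 0
    · subst hb0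
      rw [if_pos rfl, Finset.mem_singleton] at hp
      exact Or.inl hp
    · rw [if_neg hb0, Finset.mem_product, Finset.mem_singleton, Finset.mem_range] at hp
      right
      refine ⟨by omega, ?_⟩
      have h2b : 2 * b ≤ n := by omega
      omega
  · rintro (rfl | ⟨h1, h2⟩)
    · exact ⟨0, by simp, by simp⟩
    · refine ⟨p.1, ?_, ?_⟩
      · rw [Finset.mem_range]; omega
      · rw [if_neg (by omega), Finset.mem_product, Finset.mem_singleton, Finset.mem_range]
        exact ⟨rfl, by omega⟩

/-- map from parameters to lists -/
def F (n : ℕ) (p : ℕ × ℕ) : List ℕ := L p.2 p.1 (n - 2 * p.1 - p.2)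

lemma sum_F {n : ℕ} {p : ℕ × ℕ} (hp : p ∈ T n) : (F n p).sum = n := by
  rw [mem_T] at hp
  rw [F, L_sum]
  rcases hp with rfl | ⟨h1, h2⟩
  · show n + 2 * 0 + (n - 2 * 0 - n) = n
    omega
  · omega

lemma target_eq (n : ℕ) :
    {l : List ℕ | Parts12 l ∧ l.sum = n ∧ waterCells l = 0} = F n '' ↑(T n) := by
  ext l
  simp only [Set.mem_setOf_eq, Set.mem_image, Finset.mem_coe]
  constructor
  · rintro ⟨h12, hsum, hw⟩
    obtain ⟨a, b, c, rfl⟩ := struct1 l h12 (no212_of_water_zero hw)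
    rw [L_sum] at hsum
    by_cases hb : b = 0
    · subst hb
      refine ⟨(0, n), mem_T.mpr (Or.inl rfl), ?_⟩
      show L n 0 (n - 2 * 0 - n) = L a 0 c
      have h1 : n - 2 * 0 - n = 0 := by omega
      have h2 : a + c = n := by omega
      rw [h1]
      unfold L
      simp only [List.replicate_zero, List.append_nil]
      rw [← h2, List.replicate_add]
    · refine ⟨(b, a), mem_T.mpr (Or.inr ⟨by omega, by omega⟩), ?_⟩
      show L a b (n - 2 * b - a) = L a b c
      congr 1
      omega
  · rintro ⟨p, hp, rfl⟩
    exact ⟨L_parts12 _ _ _, sum_F hp, L_water _ _ _⟩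

lemma F_injOn (n : ℕ) : Set.InjOn (F n) ↑(T n) := by
  rintro ⟨b, a⟩ hp ⟨b', a'⟩ hp' heq
  rw [Finset.mem_coe, mem_T] at hp hp'
  simp only [F] at heq
  have hlen := congrArg List.length heq
  rw [L_length, L_length] at hlen
  simp only [Prod.mk.injEq] at hp hp' ⊢
  rcases hp with ⟨rfl, rfl⟩ | ⟨hb1, hb2⟩ <;> rcases hp' with ⟨rfl, rfl⟩ | ⟨hb1', hb2'⟩
  · exact ⟨rfl, rfl⟩
  · exfalso; omega
  · exfalso; omega
  · have hbb : b = b' := by omega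
    subst hbb
    have haa : a = a' := by
      by_contra hne
      rcases Nat.lt_or_ge a a' with hlt | hge
      · have h1 : a < (L a b (n - 2 * b - a)).length := by rw [L_length]; omega
        have h2 : a < (L a' b (n - 2 * b - a')).length := by rw [L_length]; omega
        have e := List.getElem_of_eq heq h1
        rw [L_get _ _ _ _ h1, L_get _ _ _ _ h2] at e
        split_ifs at e <;> omega
      · have hlt : a' < a := by omega
        have h1 : a' < (L a b (n - 2 * b - a)).length := by rw [L_length]; omega
        have h2 : a' < (L a' b (n - 2 * b - a')).length := by rw [L_length]; omega
        have e := List.getElem_of_eq heq h1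
        rw [L_get _ _ _ _ h1, L_get _ _ _ _ h2] at e
        split_ifs at e <;> omega
    exact ⟨rfl, haa⟩

lemma sum_aux (m n : ℕ) (h : 2 * m ≤ n) :
    ∑ b ∈ Finset.range (m + 1), (if b = 0 then 1 else n - 2 * b + 1) = m * (n - m) + 1 := by
  induction m with
  | zero => simp
  | succ m ih =>
    rw [Finset.sum_range_succ, ih (by omega), if_neg (Nat.succ_ne_zero m)]
    obtain ⟨k, rfl⟩ : ∃ k, n = 2 * m + 2 + k := ⟨n - 2 * m - 2, by omega⟩
    have e1 : 2 * m + 2 + k - m = m + 2 + k := by omega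
    have e2 : 2 * m + 2 + k - (m + 1) = m + 1 + k := by omega
    have e3 : 2 * m + 2 + k - 2 * (m + 1) + 1 = k + 1 := by omega
    rw [e1, e2, e3]
    ring

lemma div_aux (n : ℕ) : n / 2 * (n - n / 2) = n ^ 2 / 4 := by
  rcases Nat.even_or_odd n with ⟨q, rfl⟩ | ⟨q, rfl⟩
  · have h1 : (q + q) / 2 = q := by omega
    have h2 : q + q - q = q := by omega
    have h3 : (q + q) ^ 2 = q * q * 4 := by ring
    rw [h1, h2, h3, Nat.mul_div_cancel _ (by norm_num)]
  · have h1 : (2 * q + 1) / 2 = q := by omega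
    have h2 : 2 * q + 1 - q = q + 1 := by omega
    have h3 : (2 * q + 1) ^ 2 = q * (q + 1) * 4 + 1 := by ring
    rw [h1, h2, h3]
    generalize q * (q + 1) = x
    omega

lemma card_T (n : ℕ) : (T n).card = n ^ 2 / 4 + 1 := by
  unfold T
  have hfst : ∀ (b : ℕ) (p : ℕ × ℕ),
      p ∈ (if b = 0 then {((0 : ℕ), n)} else {b} ×ˢ Finset.range (n - 2 * b + 1)) → p.1 = b := by
    intro b p hp
    split_ifs at hp with hb
    · rw [Finset.mem_singleton] at hp; rw [hp, hb]
    · rw [Finset.mem_product, Finset.mem_singleton] at hp; exact hp.1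
  rw [Finset.card_biUnion]
  · have hcard : ∀ b ∈ Finset.range (n / 2 + 1),
        (if b = 0 then ({((0 : ℕ), n)} : Finset (ℕ × ℕ))
          else {b} ×ˢ Finset.range (n - 2 * b + 1)).card
        = if b = 0 then 1 else n - 2 * b + 1 := by
      intro b _
      split_ifs with hb
      · simp
      · rw [Finset.card_product, Finset.card_singleton, Finset.card_range, one_mul]
    rw [Finset.sum_congr rfl hcard, sum_aux (n / 2) n (by omega), div_aux]
  · intro x hx y hy hxy
    rw [Function.onFun, Finset.disjoint_left]
    intro p hpx hpy
    exact hxy ((hfst x p hpx).symm.trans (hfst y p hpy))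

end Stmt2Aux

theorem stmt2 (n : ℕ) : w n 0 = n ^ 2 / 4 + 1 := by
  unfold w
  rw [Stmt2Aux.target_eq n, Set.ncard_image_of_injOn (Stmt2Aux.F_injOn n),
    Set.ncard_coe_finset, Stmt2Aux.card_T]
end

section
/- For every n ≥ 2, w(n,0) = w(n-2,0) + n - 1, where w(n,0) is the number of compositions of n with all parts in {1,2} and zero water cells. -/
open List in
/-- The canonical zero-water block list. -/
def blk (a b c : ℕ) : List ℕ := replicate a 1 ++ replicate b 2 ++ replicate c 1

open List

lemma blk_length (a b c : ℕ) : (blk a b c).length = a + b + c := by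
  simp [blk]; omega

lemma blk_getElem (a b c i : ℕ) (h : i < (blk a b c).length) :
    (blk a b c)[i] = if i < a then 1 else if i < a + b then 2 else 1 := by
  rw [blk_length] at h
  simp only [blk]
  rcases lt_or_ge i a with h1 | h1
  · rw [getElem_append_left (by simp; omega), getElem_append_left (by simpa)]
    rw [getElem_replicate, if_pos h1]
  · rcases lt_or_ge i (a+b) with h2 | h2
    · rw [getElem_append_left (by simp; omega), getElem_append_right (by simpa)]
      rw [getElem_replicate, if_neg (by omega), if_pos (by omega)]
    · rw [getElem_append_right (by simp; omega)]
      rw [getElem_replicate, if_neg (by omega), if_neg (by omega)]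

lemma blk_water (a b c : ℕ) : waterCells (blk a b c) = 0 := by
  unfold waterCells
  rw [Set.ncard_eq_zero (Set.toFinite _)]
  ext i
  simp only [Set.mem_setOf_eq, Set.mem_empty_iff_false, iff_false]
  rintro ⟨h1, ⟨j, hji, hj2⟩, ⟨k, hik, hk2⟩⟩
  simp only [List.get_eq_getElem] at h1 hj2 hk2
  rw [blk_getElem] at h1 hj2 hk2
  have hj' : a ≤ (j:ℕ) ∧ (j:ℕ) < a + b := by split_ifs at hj2 <;> omega
  have hk' : a ≤ (k:ℕ) ∧ (k:ℕ) < a + b := by split_ifs at hk2 <;> omega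
  have hji' : (j:ℕ) < i := hji
  have hik' : (i:ℕ) < k := hik
  split_ifs at h1 <;> omega

lemma water_pos (l : List ℕ) (h : [2,1,2] <+ l) : waterCells l ≠ 0 := by
  rw [sublist_iff_exists_fin_orderEmbedding_get_eq] at h
  obtain ⟨f, hf⟩ := h
  intro h0
  unfold waterCells at h0
  rw [Set.ncard_eq_zero (Set.toFinite _)] at h0
  have hmem : f ⟨1, by simp⟩ ∈ {i : Fin l.length | l.get i = 1 ∧
      (∃ j : Fin l.length, j < i ∧ l.get j = 2) ∧
      (∃ j : Fin l.length, i < j ∧ l.get j = 2)} := by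
    refine ⟨?_, ⟨f ⟨0, by simp⟩, f.strictMono (by simp [Fin.lt_def]), ?_⟩,
      ⟨f ⟨2, by simp⟩, f.strictMono (by simp [Fin.lt_def]), ?_⟩⟩
    · have := hf ⟨1, by simp⟩; simpa using this.symm
    · have := hf ⟨0, by simp⟩; simpa using this.symm
    · have := hf ⟨2, by simp⟩; simpa using this.symm
  rw [h0] at hmem
  exact hmem

lemma struct2 (l : List ℕ) (hp : Parts12 l) (hs : ¬ [1,2] <+ l) :
    ∃ b c, l = replicate b 2 ++ replicate c 1 := by
  induction l with
  | nil => exact ⟨0, 0, rfl⟩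
  | cons x t ih =>
    rcases hp x mem_cons_self with rfl | rfl
    · have h2 : 2 ∉ t := by
        intro h2
        exact hs (Sublist.cons₂ 1 (singleton_sublist.mpr h2))
      refine ⟨0, t.length + 1, ?_⟩
      have ht : ∀ y ∈ t, y = 1 := by
        intro y hy
        rcases hp y (mem_cons_of_mem _ hy) with h | h
        · exact h
        · exact absurd (h ▸ hy) h2
      have ht2 : t = replicate t.length 1 := eq_replicate_of_mem ht
      simp [replicate_succ, ← ht2]
    · have hs' : ¬ [1,2] <+ t := fun h => hs (h.cons _)
      obtain ⟨b, c, rfl⟩ := ih (fun y hy => hp y (mem_cons_of_mem _ hy)) hs'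
      exact ⟨b+1, c, by simp [replicate_succ]⟩

lemma struct (l : List ℕ) (hp : Parts12 l) (hs : ¬ [2,1,2] <+ l) :
    ∃ a b c, l = blk a b c := by
  induction l with
  | nil => exact ⟨0, 0, 0, rfl⟩
  | cons x t ih =>
    rcases hp x mem_cons_self with rfl | rfl
    · obtain ⟨a, b, c, rfl⟩ := ih (fun y hy => hp y (mem_cons_of_mem _ hy))
        (fun h => hs (h.cons _))
      exact ⟨a+1, b, c, by simp [blk, replicate_succ]⟩
    · have hs' : ¬ [1,2] <+ t := by
        intro h
        exact hs (Sublist.cons₂ 2 h)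
      obtain ⟨b, c, rfl⟩ := struct2 t (fun y hy => hp y (mem_cons_of_mem _ hy)) hs'
      exact ⟨0, b+1, c, by simp [blk, replicate_succ]⟩

lemma blk_count (a b c : ℕ) : (blk a b c).count 2 = b := by
  simp [blk, count_append, count_replicate]

lemma blk_take (a b c : ℕ) (hb : 0 < b) :
    (blk a b c).takeWhile (· == 1) = replicate a 1 := by
  induction a with
  | zero =>
    obtain ⟨b', rfl⟩ := Nat.exists_eq_add_of_lt hb
    simp [blk, replicate_succ]
  | succ a ih =>
    simp only [blk, replicate_succ, cons_append] at ih ⊢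
    rw [takeWhile_cons_of_pos (by simp), ih]

lemma blk_sum (a b c : ℕ) : (blk a b c).sum = a + 2*b + c := by
  simp [blk, sum_append, sum_replicate]
  ring

lemma blk_inj (a b c a' b' c' : ℕ) (hb : b = 0 → a = 0) (hb' : b' = 0 → a' = 0)
    (h : blk a b c = blk a' b' c') : a = a' ∧ b = b' := by
  have hbb : b = b' := by
    have := congrArg (List.count 2) h
    rwa [blk_count, blk_count] at this
  subst hbb
  rcases Nat.eq_zero_or_pos b with rfl | hpos
  · exact ⟨(hb rfl).trans (hb' rfl).symm, rfl⟩
  · have := congrArg (fun l => (List.takeWhile (· == 1) l).length) h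
    simp only [blk_take _ _ _ hpos, length_replicate] at this
    exact ⟨this, rfl⟩

/-- Parameter set for zero-water compositions of `n`. -/
def F (n : ℕ) : Finset (ℕ × ℕ) :=
  ((Finset.range (n+1)) ×ˢ (Finset.range (n+1))).filter
    (fun p => p.1 + 2*p.2 ≤ n ∧ (p.2 = 0 → p.1 = 0))

lemma mem_F {n : ℕ} {p : ℕ × ℕ} :
    p ∈ F n ↔ p.1 + 2*p.2 ≤ n ∧ (p.2 = 0 → p.1 = 0) := by
  simp only [F, Finset.mem_filter, Finset.mem_product, Finset.mem_range]
  constructor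
  · tauto
  · intro h; exact ⟨⟨by omega, by omega⟩, h⟩

lemma card_F_rec (m : ℕ) : (F (m+2)).card = (F m).card + (m+1) := by
  classical
  have hsplit := Finset.card_filter_add_card_filter_not
    (s := F (m+2)) (p := fun p => p.2 = 1)
  set A := (F (m+2)).filter (fun p => p.2 = 1) with hA
  set B := (F (m+2)).filter (fun p => ¬ p.2 = 1) with hB
  have hcardA : A.card = m + 1 := by
    have hAi : A = (Finset.range (m+1)).image (fun a => (a, 1)) := by
      ext ⟨a, b⟩
      simp only [hA, Finset.mem_filter, mem_F, Finset.mem_image, Finset.mem_range, Prod.mk.injEq]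
      constructor
      · rintro ⟨⟨h1, h2⟩, rfl⟩
        exact ⟨a, by omega, rfl, rfl⟩
      · rintro ⟨x, hx, rfl, rfl⟩
        exact ⟨⟨by omega, by omega⟩, rfl⟩
    rw [hAi, Finset.card_image_of_injective _ (fun x y hxy => ((Prod.mk.injEq ..).mp hxy).1),
      Finset.card_range]
  have hcardB : B.card = (F m).card := by
    refine Finset.card_nbij' (fun p => (p.1, p.2 - 1))
      (fun p => if p.2 = 0 then (0,0) else (p.1, p.2 + 1)) ?_ ?_ ?_ ?_
    · rintro ⟨a, b⟩ hp
      simp only [hB, Finset.mem_filter, mem_F, Finset.mem_coe] at hp ⊢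
      omega
    · rintro ⟨a, b⟩ hp
      simp only [mem_F, Finset.mem_coe] at hp
      dsimp only
      by_cases hb : b = 0
      · subst hb
        rw [if_pos rfl]
        simp only [hB, Finset.mem_filter, mem_F, Finset.mem_coe]
        exact ⟨⟨by omega, by trivial⟩, by omega⟩
      · rw [if_neg hb]
        simp only [hB, Finset.mem_filter, mem_F, Finset.mem_coe]
        exact ⟨⟨by omega, by omega⟩, by omega⟩
    · rintro ⟨a, b⟩ hp
      simp only [hB, Finset.mem_filter, mem_F, Finset.mem_coe] at hp
      obtain ⟨⟨h1, h2⟩, h3⟩ := hp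
      by_cases hb : b = 0
      · simp [hb, h2 hb]
      · dsimp only
        have hne : ¬ (b - 1 = 0) := by omega
        rw [if_neg hne]
        simp [Prod.ext_iff]
        omega
    · rintro ⟨a, b⟩ hp
      simp only [mem_F, Finset.mem_coe] at hp
      by_cases hb : b = 0
      · simp [hb, hp.2 hb]
      · simp [hb]
  omega

lemma w_eq (n : ℕ) : w n 0 = (F n).card := by
  unfold w
  have hset : {l : List ℕ | Parts12 l ∧ l.sum = n ∧ waterCells l = 0}
      = (fun p : ℕ × ℕ => blk p.1 p.2 (n - p.1 - 2*p.2)) '' ↑(F n) := by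
    ext l
    simp only [Set.mem_setOf_eq, Set.mem_image, Finset.mem_coe]
    constructor
    · rintro ⟨hp, hsum, hw⟩
      have hns : ¬ [2,1,2] <+ l := fun h => water_pos l h hw
      obtain ⟨a, b, c, rfl⟩ := struct l hp hns
      rw [blk_sum] at hsum
      rcases Nat.eq_zero_or_pos b with rfl | hpos
      · refine ⟨(0, 0), mem_F.mpr ⟨by omega, fun _ => rfl⟩, ?_⟩
        have hc : n - 0 - 2*0 = a + c := by omega
        simp [hc, blk, ← replicate_add]
        omega
      · refine ⟨(a, b), mem_F.mpr ⟨by omega, by omega⟩, ?_⟩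
        have hc : n - a - 2*b = c := by omega
        simp [hc]
    · rintro ⟨⟨a, b⟩, hmem, rfl⟩
      rw [mem_F] at hmem
      refine ⟨?_, ?_, blk_water _ _ _⟩
      · intro x hx
        simp only [blk, mem_append, mem_replicate] at hx
        rcases hx with (h | h) | h <;> omega
      · rw [blk_sum]; omega
  rw [hset, Set.ncard_image_of_injOn, Set.ncard_coe_finset]
  rintro ⟨a, b⟩ hp ⟨a', b'⟩ hq h
  rw [Finset.mem_coe, mem_F] at hp hq
  obtain ⟨hab, hbb⟩ := blk_inj _ _ _ _ _ _ hp.2 hq.2 h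
  simp_all

theorem stmt4 (n : ℕ) (hn : 2 ≤ n) :
    w n 0 = w (n - 2) 0 + n - 1 := by
  obtain ⟨m, rfl⟩ : ∃ m, n = m + 2 := ⟨n - 2, by omega⟩
  rw [w_eq, show m + 2 - 2 = m from by omega, w_eq, card_F_rec]
  omega
end

section
/- The generating function for w(n,0) is ∑_{n≥0} w(n,0) q^n = 1/(1-q) + q²/((1-q)²(1-q²)) = (1 - q + q³)/(1 - 2q + 2q³ - q⁴). -/
/-- The power series variable, as a formal power series over ℚ. -/
noncomputable def q : PowerSeries ℚ := PowerSeries.X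

namespace Stmt6Aux

def L (a b c : ℕ) : List ℕ :=
  List.replicate a 1 ++ (List.replicate b 2 ++ List.replicate c 1)

lemma L_length (a b c : ℕ) : (L a b c).length = a + (b + c) := by simp [L]

lemma L_sum (a b c : ℕ) : (L a b c).sum = a + 2 * b + c := by
  simp [L, List.sum_replicate]; ring

lemma L_parts (a b c : ℕ) : Parts12 (L a b c) := by
  intro x hx
  simp only [L, List.mem_append, List.mem_replicate] at hx
  omega

lemma L_get (a b c i : ℕ) (h : i < (L a b c).length) :
    (L a b c)[i] = if a ≤ i ∧ i < a + b then 2 else 1 := by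
  unfold L at h ⊢
  rcases Nat.lt_or_ge i a with hi | hi
  · rw [List.getElem_append_left (by simpa using hi)]
    rw [List.getElem_replicate, if_neg (by omega)]
  · rw [List.getElem_append_right (by simpa using hi)]
    rcases Nat.lt_or_ge (i - a) b with hib | hib
    · rw [List.getElem_append_left (by simpa using hib)]
      rw [List.getElem_replicate, if_pos ⟨hi, by simp at h; omega⟩]
    · rw [List.getElem_append_right (by simpa using hib)]
      rw [List.getElem_replicate, if_neg (by omega)]

def NoWater (l : List ℕ) : Prop :=
  ∀ i j k : Fin l.length, j < i → i < k → l.get i = 1 → l.get j = 2 → l.get k = 2 → False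

lemma waterCells_eq_zero (l : List ℕ) : waterCells l = 0 ↔ NoWater l := by
  rw [waterCells, Set.ncard_eq_zero (Set.toFinite _), Set.eq_empty_iff_forall_notMem]
  constructor
  · intro h i j k hji hik h1 h2 h3
    exact h i ⟨h1, ⟨j, hji, h2⟩, ⟨k, hik, h3⟩⟩
  · rintro h i ⟨h1, ⟨j, hji, h2⟩, ⟨k, hik, h3⟩⟩
    exact h i j k hji hik h1 h2 h3

lemma L_noWater (a b c : ℕ) : NoWater (L a b c) := by
  intro i j k hji hik h1 h2 h3
  simp only [Fin.lt_def] at hji hik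
  rw [List.get_eq_getElem, L_get] at h1 h2 h3
  split_ifs at h1 h2 h3 <;> omega

lemma NoWater.tail {x : ℕ} {t : List ℕ} (h : NoWater (x :: t)) : NoWater t := by
  intro i j k hji hik h1 h2 h3
  simp only [Fin.lt_def] at hji hik
  have hi : (i : ℕ) + 1 < (x :: t).length := Nat.succ_lt_succ i.isLt
  have hj : (j : ℕ) + 1 < (x :: t).length := Nat.succ_lt_succ j.isLt
  have hk : (k : ℕ) + 1 < (x :: t).length := Nat.succ_lt_succ k.isLt
  exact h ⟨(i : ℕ) + 1, hi⟩ ⟨(j : ℕ) + 1, hj⟩ ⟨(k : ℕ) + 1, hk⟩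
    (by simp only [Fin.mk_lt_mk]; omega) (by simp only [Fin.mk_lt_mk]; omega)
    (by simpa using h1) (by simpa using h2) (by simpa using h3)

lemma structure_of (l : List ℕ) (h12 : Parts12 l) (hw : NoWater l) :
    ∃ a b c, l = L a b c := by
  induction l with
  | nil => exact ⟨0, 0, 0, rfl⟩
  | cons x t ih =>
    have h12t : Parts12 t := fun y hy => h12 y (List.mem_cons_of_mem _ hy)
    obtain ⟨a, b, c, ht⟩ := ih h12t hw.tail
    rcases h12 x (List.mem_cons_self) with hx | hx
    · subst hx
      exact ⟨a + 1, b, c, by simp [ht, L, List.replicate_succ]⟩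
    · subst hx
      rcases Nat.eq_zero_or_pos a with ha | ha
      · subst ha
        exact ⟨0, b + 1, c, by simp [ht, L, List.replicate_succ]⟩
      · rcases Nat.eq_zero_or_pos b with hb | hb
        · subst hb
          refine ⟨0, 1, a + c, ?_⟩
          simp [ht, L, List.replicate_succ, ← List.replicate_add]
        · exfalso
          have hlen : (2 :: t).length = 1 + (a + (b + c)) := by simp [ht, L_length]; omega
          have h1lt : (1 : ℕ) < (2 :: t).length := by omega
          have hklt : a + 1 < (2 :: t).length := by omega
          have h0lt : (0 : ℕ) < (2 :: t).length := by omega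
          refine hw ⟨1, h1lt⟩ ⟨0, h0lt⟩ ⟨a + 1, hklt⟩ ?_ ?_ ?_ ?_ ?_
          · simp [Fin.lt_def]
          · simp [Fin.lt_def]; omega
          · show (2 :: t)[1] = 1
            have h0t : 0 < t.length := by simp [ht, L_length]; omega
            rw [List.getElem_cons_succ, List.getElem_of_eq ht h0t, L_get]
            rw [if_neg (by omega)]
          · simp
          · show (2 :: t)[a + 1] = 2
            have hat : a < t.length := by simp [ht, L_length]; omega
            rw [List.getElem_cons_succ, List.getElem_of_eq ht hat, L_get]
            rw [if_pos ⟨le_refl a, by omega⟩]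

lemma L_count (a b c : ℕ) : (L a b c).count 2 = b := by
  simp [L, List.count_append, List.count_replicate]

lemma L_lt_absurd {a a' b c c' : ℕ} (hb : 0 < b) (h : L a b c = L a' b c')
    (hlt : a < a') : False := by
  have hlen : a < (L a b c).length := by rw [L_length]; omega
  have h2 := List.getElem_of_eq h hlen
  rw [L_get, L_get] at h2
  rw [if_pos ⟨le_refl a, by omega⟩, if_neg (by omega)] at h2
  exact absurd h2 (by norm_num)

lemma L_inj_a {a a' b c c' : ℕ} (hb : 0 < b) (h : L a b c = L a' b c') : a = a' := by
  rcases Nat.lt_trichotomy a a' with hlt | heq | hgt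
  · exact absurd hlt (fun hl => L_lt_absurd hb h hl)
  · exact heq
  · exact absurd hgt (fun hl => L_lt_absurd hb h.symm hl)

lemma L_zero_mid (a c : ℕ) : L a 0 c = List.replicate (a + c) 1 := by
  simp [L, ← List.replicate_add]


def D0 (n : ℕ) : Finset (ℕ × ℕ) :=
  (Finset.Icc 1 (n / 2)).biUnion fun b => (Finset.range (n + 1 - 2 * b)).image fun c => (b, c)

lemma mem_D0 {n : ℕ} {p : ℕ × ℕ} : p ∈ D0 n ↔ 1 ≤ p.1 ∧ 2 * p.1 + p.2 ≤ n := by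
  obtain ⟨b, c⟩ := p
  simp only [D0, Finset.mem_biUnion, Finset.mem_Icc, Finset.mem_image, Finset.mem_range,
    Prod.mk.injEq]
  constructor
  · rintro ⟨b', ⟨hb1, hb2⟩, c', hc, rfl, rfl⟩
    omega
  · rintro ⟨h1, h2⟩
    exact ⟨b, ⟨h1, by omega⟩, c, by omega, rfl, rfl⟩

lemma sum_aux (n : ℕ) : ∀ k, 2 * k ≤ n → ∑ b ∈ Finset.Icc 1 k, (n + 1 - 2 * b) = k * (n - k) := by
  intro k
  induction k with
  | zero => simp
  | succ k ih =>
    intro h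
    rw [Finset.sum_Icc_succ_top (by omega), ih (by omega)]
    have e1 : n - k = (n - (k + 1)) + 1 := by omega
    obtain ⟨d, hd⟩ := Nat.le.dest h
    have e2 : n - k = k + 2 + d := by omega
    have e3 : n + 1 - 2 * (k + 1) = d + 1 := by omega
    have e4 : n - (k + 1) = k + 1 + d := by omega
    rw [e2, e3, e4]; ring

lemma card_D0 (n : ℕ) : (D0 n).card = (n / 2) * (n - n / 2) := by
  rw [D0, Finset.card_biUnion]
  · rw [Finset.sum_congr rfl (fun b _ => by
      rw [Finset.card_image_of_injective _ (fun c c' h => by simpa using h), Finset.card_range])]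
    exact sum_aux n (n / 2) (by omega)
  · intro x hx y hy hxy
    simp only [Finset.disjoint_left, Finset.mem_image, Finset.mem_range]
    rintro p ⟨c, _, rfl⟩ ⟨c', _, h⟩
    exact hxy (by simpa using congrArg Prod.fst h.symm)

lemma w0_eq (n : ℕ) : w n 0 = (n / 2) * (n - n / 2) + 1 := by
  have hset : {l : List ℕ | Parts12 l ∧ l.sum = n ∧ waterCells l = 0}
      = insert (List.replicate n 1)
          (((D0 n).image fun p => L (n - 2 * p.1 - p.2) p.1 p.2 : Finset (List ℕ)) :
            Set (List ℕ)) := by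
    ext l
    simp only [Set.mem_setOf_eq, Set.mem_insert_iff, Finset.coe_image, Set.mem_image,
      Finset.mem_coe]
    constructor
    · rintro ⟨h12, hsum, hw⟩
      rw [waterCells_eq_zero] at hw
      obtain ⟨a, b, c, rfl⟩ := structure_of l h12 hw
      rw [L_sum] at hsum
      rcases Nat.eq_zero_or_pos b with hb | hb
      · left
        subst hb
        rw [L_zero_mid]
        have h : a + c = n := by omega
        rw [h]
      · right
        refine ⟨(b, c), mem_D0.2 ⟨hb, by omega⟩, ?_⟩
        have ha : n - 2 * b - c = a := by omega
        simp only [ha]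
    · rintro (rfl | ⟨⟨b, c⟩, hmem, rfl⟩)
      · refine ⟨fun x hx => Or.inl (List.eq_of_mem_replicate hx), by simp, ?_⟩
        have h : List.replicate n 1 = L n 0 0 := by rw [L_zero_mid]; norm_num
        rw [h, waterCells_eq_zero]
        exact L_noWater _ _ _
      · obtain ⟨hb, hle⟩ := mem_D0.1 hmem
        refine ⟨L_parts _ _ _, ?_, ?_⟩
        · rw [L_sum]; simp only at hb hle ⊢; omega
        · rw [waterCells_eq_zero]; exact L_noWater _ _ _
  rw [w, hset]
  have hnotmem : List.replicate n 1 ∉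
      (((D0 n).image fun p => L (n - 2 * p.1 - p.2) p.1 p.2 : Finset (List ℕ)) :
        Set (List ℕ)) := by
    intro hmem
    simp only [Finset.coe_image, Set.mem_image, Finset.mem_coe] at hmem
    obtain ⟨⟨b, c⟩, hp, heq⟩ := hmem
    obtain ⟨hb, _⟩ := mem_D0.1 hp
    have h1 := congrArg (List.count 2) heq
    rw [L_count, List.count_replicate] at h1
    simp only at hb
    simp at h1
    omega
  rw [Set.ncard_insert_of_notMem hnotmem, Set.ncard_coe_finset,
    Finset.card_image_of_injOn, card_D0]
  rintro ⟨b, c⟩ hm ⟨b', c'⟩ hm' heq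
  obtain ⟨hb, hle⟩ := mem_D0.1 (Finset.mem_coe.1 hm)
  obtain ⟨hb', hle'⟩ := mem_D0.1 (Finset.mem_coe.1 hm')
  simp only at hb hle hb' hle' heq
  have hbb : b = b' := by
    have := congrArg (List.count 2) heq
    rwa [L_count, L_count] at this
  subst hbb
  have haa := L_inj_a hb heq
  have : c = c' := by omega
  subst this
  rfl

lemma w_even (k : ℕ) : w (2 * k) 0 = k * k + 1 := by
  rw [w0_eq]
  have h1 : 2 * k / 2 = k := by omega
  rw [h1]
  have h2 : 2 * k - k = k := by omega
  rw [h2]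

lemma w_odd (k : ℕ) : w (2 * k + 1) 0 = k * (k + 1) + 1 := by
  rw [w0_eq]
  have h1 : (2 * k + 1) / 2 = k := by omega
  rw [h1]
  have h2 : 2 * k + 1 - k = k + 1 := by omega
  rw [h2]

lemma rec4 (n : ℕ) :
    (w (n + 4) 0 : ℚ) - 2 * (w (n + 3) 0) + 2 * (w (n + 1) 0) - w n 0 = 0 := by
  rcases Nat.even_or_odd n with ⟨k, hk⟩ | ⟨k, hk⟩
  · have hn : n = 2 * k := by omega
    subst hn
    have e1 : 2 * k + 4 = 2 * (k + 2) := by ring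
    have e2 : 2 * k + 3 = 2 * (k + 1) + 1 := by ring
    rw [e1, e2, w_even, w_odd, w_odd, w_even]
    push_cast
    ring
  · have hn : n = 2 * k + 1 := by omega
    subst hn
    have e1 : 2 * k + 1 + 4 = 2 * (k + 2) + 1 := by ring
    have e2 : 2 * k + 1 + 3 = 2 * (k + 2) := by ring
    have e3 : 2 * k + 1 + 1 = 2 * (k + 1) := by ring
    rw [e1, e2, e3, w_odd, w_even, w_even, w_odd]
    push_cast
    ring

open PowerSeries

lemma key : PowerSeries.mk (fun n => (w n 0 : ℚ)) * (1 - 2 * q + 2 * q ^ 3 - q ^ 4)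
    = 1 - q + q ^ 3 := by
  have w0 : w 0 0 = 1 := by rw [w0_eq]
  have w1 : w 1 0 = 1 := by rw [w0_eq]
  have w2 : w 2 0 = 2 := by rw [w0_eq]
  have w3 : w 3 0 = 3 := by rw [w0_eq]
  have h2 : (2 : PowerSeries ℚ) = PowerSeries.C 2 := by
    exact (map_ofNat (PowerSeries.C) 2).symm
  have expand : PowerSeries.mk (fun n => (w n 0 : ℚ)) * (1 - 2 * q + 2 * q ^ 3 - q ^ 4)
      = PowerSeries.mk (fun n => (w n 0 : ℚ))
        - PowerSeries.C 2 * (PowerSeries.mk (fun n => (w n 0 : ℚ)) * X ^ 1)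
        + PowerSeries.C 2 * (PowerSeries.mk (fun n => (w n 0 : ℚ)) * X ^ 3)
        - PowerSeries.mk (fun n => (w n 0 : ℚ)) * X ^ 4 := by
    rw [← h2, q]; ring
  rw [expand]
  ext n
  simp only [map_sub, map_add, PowerSeries.coeff_C_mul, PowerSeries.coeff_mul_X_pow',
    PowerSeries.coeff_mk, PowerSeries.coeff_one, q, PowerSeries.coeff_X,
    PowerSeries.coeff_X_pow]
  rcases n with _ | _ | _ | _ | m
  · norm_num [w0]
  · norm_num [w0, w1]
  · norm_num [w1, w2]
  · norm_num [w0, w2, w3]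
  · have e0 : m + 1 + 1 + 1 + 1 = m + 4 := by omega
    rw [e0]
    rw [if_pos (by omega : 1 ≤ m + 4), if_pos (by omega : 3 ≤ m + 4),
      if_pos (by omega : 4 ≤ m + 4), if_neg (by omega : ¬(m + 4 = 0)),
      if_neg (by omega : ¬(m + 4 = 1)), if_neg (by omega : ¬(m + 4 = 3))]
    have e1 : m + 4 - 1 = m + 3 := by omega
    have e2 : m + 4 - 3 = m + 1 := by omega
    have e3 : m + 4 - 4 = m := by omega
    rw [e1, e2, e3]
    linear_combination rec4 m

lemma constCoeff_D : PowerSeries.constantCoeff (1 - 2 * q + 2 * q ^ 3 - q ^ 4) = 1 := by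
  simp [q]

lemma D_ne : (1 - 2 * q + 2 * q ^ 3 - q ^ 4 : PowerSeries ℚ) ≠ 0 := by
  intro h
  have := constCoeff_D
  rw [h, map_zero] at this
  exact one_ne_zero this.symm

end Stmt6Aux

theorem stmt6 :
    PowerSeries.mk (fun n => (w n 0 : ℚ)) =
      (1 - q)⁻¹ + q ^ 2 * ((1 - q) ^ 2 * (1 - q ^ 2))⁻¹ ∧
    PowerSeries.mk (fun n => (w n 0 : ℚ)) =
      (1 - q + q ^ 3) * (1 - 2 * q + 2 * q ^ 3 - q ^ 4)⁻¹ := by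
  have hDne : PowerSeries.constantCoeff (1 - 2 * q + 2 * q ^ 3 - q ^ 4) ≠ 0 := by
    rw [Stmt6Aux.constCoeff_D]; exact one_ne_zero
  constructor
  · have h1 : PowerSeries.constantCoeff (1 - q) ≠ 0 := by simp [q]
    have h2 : PowerSeries.constantCoeff ((1 - q) ^ 2 * (1 - q ^ 2)) ≠ 0 := by simp [q]
    have e1 := PowerSeries.inv_mul_cancel _ h1
    have e2 := PowerSeries.inv_mul_cancel _ h2
    apply mul_right_cancel₀ Stmt6Aux.D_ne
    rw [Stmt6Aux.key]
    set A := (1 - q)⁻¹ with hA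
    set B := ((1 - q) ^ 2 * (1 - q ^ 2))⁻¹ with hB
    linear_combination (-((1 - q) * (1 - q ^ 2))) * e1 - q ^ 2 * e2
  · exact (PowerSeries.eq_mul_inv_iff_mul_eq hDne).2 Stmt6Aux.key
end

section
/- For every fixed k ≥ 1, ∑_{n≥0} w(n,k) q^n = q^{k+4} / ((1-q)²(1-q²)^{k+1}) as formal power series. -/
-- ===== auxiliary development =====
def wordF (a b : ℕ) (M : List ℕ) : List ℕ :=
  List.replicate a 1 ++ 2 :: (M ++ 2 :: List.replicate b 1)

lemma len_wordF (a b : ℕ) (M : List ℕ) : (wordF a b M).length = M.length + a + b + 2 := by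
  simp [wordF]; omega

lemma wf1 (a b i : ℕ) (M : List ℕ) (h : i < a) (h2 : i < (wordF a b M).length) : (wordF a b M)[i] = 1 := by
  simp only [wordF]
  rw [List.getElem_append_left (by simpa using h)]
  simp

lemma wf2 (a b : ℕ) (M : List ℕ) (h2 : a < (wordF a b M).length) : (wordF a b M)[a] = 2 := by
  simp only [wordF]
  rw [List.getElem_append_right (by simp)]
  simp

lemma wf3 (a b i : ℕ) (M : List ℕ) (h : i < M.length) (h2 : a + 1 + i < (wordF a b M).length) :
    (wordF a b M)[a+1+i] = M[i] := by
  simp only [wordF]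
  rw [List.getElem_append_right (by simp; omega)]
  simp only [List.length_replicate, show a + 1 + i - a = i + 1 from by omega]
  rw [List.getElem_cons_succ]
  rw [List.getElem_append_left h]

lemma wf4 (a b : ℕ) (M : List ℕ) (h2 : a + 1 + M.length < (wordF a b M).length) :
    (wordF a b M)[a+1+M.length] = 2 := by
  simp only [wordF]
  rw [List.getElem_append_right (by simp; omega)]
  simp only [List.length_replicate, show a + 1 + M.length - a = M.length + 1 from by omega]
  rw [List.getElem_cons_succ]
  rw [List.getElem_append_right (le_refl _)]
  simp

lemma wf5 (a b i : ℕ) (M : List ℕ) (h : a + 1 + M.length < i) (h2 : i < (wordF a b M).length) :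
    (wordF a b M)[i] = 1 := by
  have hL : i < M.length + a + b + 2 := by rw [← len_wordF a b M]; exact h2
  simp only [wordF]
  rw [List.getElem_append_right (by simp; omega)]
  obtain ⟨t, ht⟩ : ∃ t, i - a = (M.length + t) + 1 := ⟨i - a - M.length - 1, by omega⟩
  simp only [List.length_replicate, ht]
  rw [List.getElem_cons_succ]
  rw [List.getElem_append_right (Nat.le_add_right _ _)]
  simp only [Nat.add_sub_cancel_left]
  obtain ⟨u, hu⟩ : ∃ u, t = u + 1 := ⟨t - 1, by omega⟩
  simp only [hu]
  rw [List.getElem_cons_succ]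
  simp


theorem count_eq_card_filter (l : List ℕ) (x : ℕ) :
    l.count x = (Finset.univ.filter (fun i : Fin l.length => l.get i = x)).card := by
  conv_lhs => rw [← List.ofFn_get l]
  rw [List.ofFn_eq_map, List.count, List.countP_map]
  simp only [Finset.card, Finset.filter, Finset.univ, Fin.fintype, List.countP_eq_length_filter,
    Multiset.filter_coe, Multiset.coe_card]
  congr 1
  try (apply List.filter_congr; intro a _; simp [List.get_eq_getElem])

theorem count_eq_ncard (l : List ℕ) (x : ℕ) :
    {i : Fin l.length | l.get i = x}.ncard = l.count x := by
  classical
  rw [count_eq_card_filter, ← Set.ncard_coe_finset]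
  congr 1
  ext i
  simp

theorem waterCells_wordF (a b : ℕ) (M : List ℕ) :
    waterCells (wordF a b M) = M.count 1 := by
  classical
  have hL : (wordF a b M).length = M.length + a + b + 2 := len_wordF a b M
  have he : ∀ j : Fin M.length, (a + 1 + (j : ℕ)) < (wordF a b M).length := by
    intro j
    have := j.isLt
    omega
  set e : Fin M.length → Fin (wordF a b M).length := fun j => ⟨a + 1 + j, he j⟩ with hee
  have hinj : Function.Injective e := by
    intro x y hxy
    apply Fin.ext
    have := congrArg Fin.val hxy
    simpa [hee] using this
  have hset : {i : Fin (wordF a b M).length | (wordF a b M).get i = 1 ∧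
      (∃ j : Fin (wordF a b M).length, j < i ∧ (wordF a b M).get j = 2) ∧
      (∃ j : Fin (wordF a b M).length, i < j ∧ (wordF a b M).get j = 2)} =
      e '' {j : Fin M.length | M.get j = 1} := by
    ext i
    simp only [Set.mem_setOf_eq, Set.mem_image, List.get_eq_getElem]
    constructor
    · rintro ⟨h1, ⟨j1, hj1lt, hj1⟩, ⟨j2, hj2lt, hj2⟩⟩
      rw [Fin.lt_def] at hj1lt hj2lt
      have hib : (i : ℕ) < (wordF a b M).length := i.isLt
      have hj1b : (j1 : ℕ) < (wordF a b M).length := j1.isLt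
      have hj2b : (j2 : ℕ) < (wordF a b M).length := j2.isLt
      have hlow : a + 1 ≤ (i : ℕ) := by
        by_contra hc
        push_neg at hc
        rcases Nat.lt_or_ge (i : ℕ) a with hia | hia
        · have := wf1 a b j1 M (by omega) (by omega)
          omega
        · have hia' : (i : ℕ) = a := by omega
          have := wf2 a b M (by omega)
          simp only [hia'] at h1
          omega
      have hhigh : (i : ℕ) < a + 1 + M.length := by
        by_contra hc
        push_neg at hc
        rcases Nat.lt_or_ge (a + 1 + M.length) (i : ℕ) with hia | hia
        · have := wf5 a b j2 M (by omega) (by omega)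
          omega
        · have hia' : (i : ℕ) = a + 1 + M.length := by omega
          have := wf4 a b M (by omega)
          simp only [hia'] at h1
          omega
      have hji : (i : ℕ) - (a + 1) < M.length := by omega
      refine ⟨⟨(i : ℕ) - (a + 1), hji⟩, ?_, ?_⟩
      · have h3 := wf3 a b ((i : ℕ) - (a + 1)) M hji (by omega)
        have h4 : a + 1 + ((i : ℕ) - (a + 1)) = (i : ℕ) := by omega
        simp only [h4] at h3
        show M[(i : ℕ) - (a + 1)]'hji = 1
        rw [← h3]
        exact h1
      · apply Fin.ext
        show a + 1 + ((i : ℕ) - (a + 1)) = (i : ℕ)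
        omega
    · rintro ⟨j, hj, rfl⟩
      try simp only [Set.mem_setOf_eq] at hj
      have hjb := j.isLt
      have h3 := wf3 a b (j : ℕ) M j.isLt (by omega)
      have h2 := wf2 a b M (by omega)
      have h4 := wf4 a b M (by omega)
      refine ⟨?_, ⟨⟨a, by omega⟩, ?_, ?_⟩, ⟨⟨a + 1 + M.length, by omega⟩, ?_, ?_⟩⟩
      · show (wordF a b M)[a + 1 + (j : ℕ)]'(he j) = 1
        rw [h3]
        exact hj
      · rw [Fin.lt_def]
        show a < a + 1 + (j : ℕ)
        omega
      · exact h2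
      · rw [Fin.lt_def]
        show a + 1 + (j : ℕ) < a + 1 + M.length
        omega
      · exact h4
  rw [waterCells, hset, Set.ncard_image_of_injective _ hinj, count_eq_ncard]


lemma aux_rep (a : ℕ) : ∀ (a' : ℕ) (t t' : List ℕ),
    List.replicate a 1 ++ 2 :: t = List.replicate a' 1 ++ 2 :: t' → a = a' ∧ t = t' := by
  induction a with
  | zero =>
    intro a' t t' h
    cases a' with
    | zero => simpa using h
    | succ a' => simp [List.replicate_succ] at h
  | succ a ih =>
    intro a' t t' h
    cases a' with
    | zero => simp [List.replicate_succ] at h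
    | succ a' =>
      simp only [List.replicate_succ, List.cons_append, List.cons.injEq] at h
      obtain ⟨h1, h2⟩ := ih a' t t' h.2
      exact ⟨by omega, h2⟩

lemma word_inj {a b a' b' : ℕ} {M M' : List ℕ} (h : wordF a b M = wordF a' b' M') :
    a = a' ∧ b = b' ∧ M = M' := by
  unfold wordF at h
  obtain ⟨ha, h2⟩ := aux_rep a a' _ _ h
  have h3 := congrArg List.reverse h2
  simp only [List.reverse_append, List.reverse_cons, List.reverse_replicate] at h3
  have h3' : List.replicate b 1 ++ 2 :: M.reverse = List.replicate b' 1 ++ 2 :: M'.reverse := by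
    simpa using h3
  obtain ⟨hb, h4⟩ := aux_rep b b' _ _ h3'
  exact ⟨ha, hb, by simpa using congrArg List.reverse h4⟩

lemma split1 : ∀ (l : List ℕ), Parts12 l → 2 ∈ l →
    ∃ a t, l = List.replicate a 1 ++ 2 :: t := by
  intro l
  induction l with
  | nil => intro _ h; simp at h
  | cons x r ih =>
    intro hp hm
    rcases hp x (by simp) with hx | hx
    · have : 2 ∈ r := by
        rcases List.mem_cons.mp hm with h | h
        · omega
        · exact h
      obtain ⟨a, t, ht⟩ := ih (fun y hy => hp y (by simp [hy])) this
      exact ⟨a + 1, t, by simp [List.replicate_succ, ht, hx]⟩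
    · exact ⟨0, r, by simp [hx]⟩

lemma rf1 (a i : ℕ) (t : List ℕ) (h : i < a) (h2 : i < (List.replicate a 1 ++ 2 :: t).length) :
    (List.replicate a 1 ++ 2 :: t)[i] = 1 := by
  rw [List.getElem_append_left (by simpa using h)]
  simp

lemma rf3 (a i : ℕ) (t : List ℕ) (h : i < t.length)
    (h2 : a + 1 + i < (List.replicate a 1 ++ 2 :: t).length) :
    (List.replicate a 1 ++ 2 :: t)[a + 1 + i] = t[i] := by
  rw [List.getElem_append_right (by simp; omega)]
  simp only [List.length_replicate, show a + 1 + i - a = i + 1 from by omega]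
  rw [List.getElem_cons_succ]

lemma decomp (l : List ℕ) (h12 : Parts12 l) (hw : 1 ≤ waterCells l) :
    ∃ a b M, l = wordF a b M ∧ Parts12 M := by
  classical
  have hne : {i : Fin l.length | l.get i = 1 ∧ (∃ j : Fin l.length, j < i ∧ l.get j = 2) ∧
      (∃ j : Fin l.length, i < j ∧ l.get j = 2)}.Nonempty := by
    apply Set.nonempty_of_ncard_ne_zero
    unfold waterCells at hw
    omega
  obtain ⟨i, hi1, ⟨j1, hj1lt, hj1⟩, ⟨j2, hj2lt, hj2⟩⟩ := hne
  rw [Fin.lt_def] at hj1lt hj2lt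
  simp only [List.get_eq_getElem] at hi1 hj1 hj2
  -- l contains a 2
  have h2l : 2 ∈ l := by rw [← hj1]; exact List.getElem_mem _
  obtain ⟨a, t, hat⟩ := split1 l h12 h2l
  have hpt : Parts12 t := fun y hy => h12 y (by simp [hat, hy])
  -- positions < a have value 1 hence j1 ≥ a, j2 ≥ a+2 > a+1
  have hj1a : a ≤ (j1 : ℕ) := by
    by_contra hc
    push_neg at hc
    have := rf1 a j1 t hc (by rw [← hat]; exact j1.isLt)
    simp only [← hat] at this
    omega
  have hlen : l.length = a + 1 + t.length := by simp [hat]; omega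
  have h2t : 2 ∈ t := by
    have hj2a : a + 1 ≤ (j2 : ℕ) := by omega
    have hj2b : (j2 : ℕ) - (a + 1) < t.length := by
      have := j2.isLt; omega
    have := rf3 a ((j2 : ℕ) - (a + 1)) t hj2b (by rw [← hat]; have := j2.isLt; omega)
    have heq : a + 1 + ((j2 : ℕ) - (a + 1)) = (j2 : ℕ) := by omega
    simp only [heq, ← hat] at this
    rw [← this.symm.trans hj2]
    exact List.getElem_mem _
  -- split t from the right
  have h2tr : 2 ∈ t.reverse := by simpa using h2t
  have hptr : Parts12 t.reverse := fun y hy => hpt y (by simpa using hy)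
  obtain ⟨b, s, hbs⟩ := split1 t.reverse hptr h2tr
  have hts : t = s.reverse ++ 2 :: List.replicate b 1 := by
    have := congrArg List.reverse hbs
    simpa [List.reverse_append, List.reverse_replicate] using this
  refine ⟨a, b, s.reverse, ?_, ?_⟩
  · rw [hat, hts]; rfl
  · intro y hy
    exact hpt y (by rw [hts]; simp [hy])

open Finset in
theorem countP_range_eq (p : ℕ → Bool) (L : ℕ) :
    (List.range L).countP p = ((Finset.range L).filter (fun i => p i)).card := by
  simp [Finset.card, Finset.filter, Finset.range, Multiset.range, List.countP_eq_length_filter]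

def gs (s : Finset ℕ) : ℕ → ℕ := fun i => if i ∈ s then 2 else 1

def mid (k m : ℕ) : Finset (List ℕ) :=
  ((Finset.range (k + m)).powersetCard m).image fun s => (List.range (k + m)).map (gs s)

lemma count_gs_two (L : ℕ) (s : Finset ℕ) (hs : s ⊆ Finset.range L) :
    ((List.range L).map (gs s)).count 2 = s.card := by
  rw [List.count, List.countP_map]
  have : (List.range L).countP ((fun x => x == 2) ∘ gs s)
      = (List.range L).countP (fun i => decide (i ∈ s)) := by
    apply List.countP_congr
    intro i _
    simp [gs]
  rw [this, countP_range_eq]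
  congr 1
  simp only [decide_eq_true_eq]
  rw [Finset.filter_mem_eq_inter, Finset.inter_eq_right.mpr hs]

lemma count_gs_one (L : ℕ) (s : Finset ℕ) (hs : s ⊆ Finset.range L) :
    ((List.range L).map (gs s)).count 1 = L - s.card := by
  rw [List.count, List.countP_map]
  have : (List.range L).countP ((fun x => x == 1) ∘ gs s)
      = (List.range L).countP (fun i => decide (i ∉ s)) := by
    apply List.countP_congr
    intro i _
    simp only [gs, Function.comp]
    split <;> simp_all
  rw [this, countP_range_eq]
  simp only [decide_eq_true_eq]
  rw [Finset.filter_not, Finset.card_sdiff_of_subset (by simpa using Finset.filter_subset _ _)]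
  rw [Finset.card_range]
  congr 1
  rw [Finset.filter_mem_eq_inter, Finset.inter_eq_right.mpr hs]

lemma parts12_gs (L : ℕ) (s : Finset ℕ) : Parts12 ((List.range L).map (gs s)) := by
  intro x hx
  simp only [List.mem_map] at hx
  obtain ⟨i, _, rfl⟩ := hx
  unfold gs
  split <;> simp

lemma sum12 (M : List ℕ) (h : Parts12 M) : M.sum = M.count 1 + 2 * M.count 2 := by
  induction M with
  | nil => simp
  | cons x r ih =>
    have hr := ih (fun y hy => h y (by simp [hy]))
    rcases h x (by simp) with hx | hx <;>
      subst hx <;> simp [List.count_cons, hr] <;> ring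

lemma len12 (M : List ℕ) (h : Parts12 M) : M.length = M.count 1 + M.count 2 := by
  induction M with
  | nil => simp
  | cons x r ih =>
    have hr := ih (fun y hy => h y (by simp [hy]))
    rcases h x (by simp) with hx | hx <;>
      subst hx <;> simp [List.count_cons, hr] <;> ring

lemma mid_counts {M : List ℕ} {k m : ℕ} (h : M ∈ mid k m) :
    Parts12 M ∧ M.count 1 = k ∧ M.count 2 = m ∧ M.length = k + m ∧ M.sum = k + 2 * m := by
  rw [mid, Finset.mem_image] at h
  obtain ⟨s, hs, rfl⟩ := h
  rw [Finset.mem_powersetCard] at hs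
  obtain ⟨hsub, hcard⟩ := hs
  have h2 := count_gs_two (k + m) s hsub
  have h1 := count_gs_one (k + m) s hsub
  rw [hcard] at h1 h2
  have hp := parts12_gs (k + m) s
  refine ⟨hp, by omega, by omega, by simp, ?_⟩
  rw [sum12 _ hp, h1, h2]
  omega

lemma mem_mid_of {M : List ℕ} (h : Parts12 M) : M ∈ mid (M.count 1) (M.count 2) := by
  classical
  set L := M.length with hL
  set s : Finset ℕ := (Finset.range L).filter (fun i => M[i]? = some 2) with hs
  have hsub : s ⊆ Finset.range L := Finset.filter_subset _ _
  have hMeq : M = (List.range L).map (gs s) := by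
    apply List.ext_getElem
    · simp [hL]
    · intro i hi hi'
      rw [List.getElem_map, List.getElem_range]
      unfold gs
      rw [hs]
      simp only [Finset.mem_filter, Finset.mem_range]
      have hiL : i < L := by simpa using hi'
      rw [List.getElem?_eq_getElem (show i < M.length by omega)]
      rcases h M[i] (List.getElem_mem _) with h1 | h2
      · rw [if_neg (by simp [h1]), h1]
      · rw [if_pos ⟨hiL, by simp [h2]⟩, h2]
  have hmem : M ∈ mid (L - s.card) s.card := by
    rw [mid, Finset.mem_image]
    refine ⟨s, ?_, ?_⟩
    · rw [Finset.mem_powersetCard]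
      have : L - s.card + s.card = L := by
        have := Finset.card_le_card hsub
        simp only [Finset.card_range] at this
        omega
      rw [this]
      exact ⟨hsub, rfl⟩
    · have : L - s.card + s.card = L := by
        have := Finset.card_le_card hsub
        simp only [Finset.card_range] at this
        omega
      rw [this, ← hMeq]
  obtain ⟨_, hc1, hc2, _, _⟩ := mid_counts hmem
  rw [← hc1, ← hc2] at hmem
  exact hmem

lemma card_mid (k m : ℕ) : (mid k m).card = Nat.choose (k + m) m := by
  rw [mid, Finset.card_image_of_injOn, Finset.card_powersetCard, Finset.card_range]
  intro s hs s' hs' heq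
  rw [Finset.mem_coe, Finset.mem_powersetCard] at hs hs'
  ext i
  by_cases hi : i < k + m
  · have hb : i < ((List.range (k + m)).map (gs s)).length := by simpa using hi
    have hb' : i < ((List.range (k + m)).map (gs s')).length := by simpa using hi
    have this' := congrArg (fun l => l[i]?) heq
    simp only [] at this'
    rw [List.getElem?_eq_getElem hb, List.getElem?_eq_getElem hb'] at this'
    simp only [List.getElem_map, List.getElem_range, Option.some.injEq] at this'
    have this := this'
    unfold gs at this
    constructor <;> intro him
    · by_contra hc
      rw [if_pos him, if_neg hc] at this
      omega
    · by_contra hc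
      rw [if_neg hc, if_pos him] at this
      omega
  · constructor <;> intro him
    · exact absurd (Finset.mem_range.mp (hs.1 him)) hi
    · exact absurd (Finset.mem_range.mp (hs'.1 him)) hi



def DD (n k : ℕ) : Finset (List ℕ) :=
  (((Finset.range (n + 1)) ×ˢ (Finset.range (n + 1))).filter
    (fun p => p.1 + (k + 2 * p.2) + 4 ≤ n)).biUnion
    (fun p => (mid k p.2).image (fun M => wordF p.1 (n - (p.1 + (k + 2 * p.2) + 4)) M))

lemma sum_wordF (a b : ℕ) (M : List ℕ) : (wordF a b M).sum = a + b + 4 + M.sum := by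
  simp [wordF]
  omega

lemma parts12_wordF (a b : ℕ) (M : List ℕ) (h : Parts12 M) : Parts12 (wordF a b M) := by
  intro x hx
  unfold wordF at hx
  simp only [List.mem_append, List.mem_cons, List.mem_replicate] at hx
  rcases hx with ⟨_, h1⟩ | (h2 | (hM | (h2 | ⟨_, h1⟩)))
  · left; exact h1
  · right; exact h2
  · exact h x hM
  · right; exact h2
  · left; exact h1

lemma card_DD (n k : ℕ) :
    (DD n k).card = ∑ m ∈ Finset.range (n + 1), (n + 1 - (k + 2 * m + 4)) * Nat.choose (k + m) m := by
  classical
  rw [DD, Finset.card_biUnion]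
  · have hcard : ∀ p ∈ ((Finset.range (n + 1)) ×ˢ (Finset.range (n + 1))).filter
        (fun p : ℕ × ℕ => p.1 + (k + 2 * p.2) + 4 ≤ n),
        ((mid k p.2).image (fun M => wordF p.1 (n - (p.1 + (k + 2 * p.2) + 4)) M)).card
          = Nat.choose (k + p.2) p.2 := by
      intro p _
      rw [Finset.card_image_of_injOn, card_mid]
      intro M hM M' hM' heq
      exact (word_inj heq).2.2
    rw [Finset.sum_congr rfl hcard]
    rw [Finset.sum_filter, Finset.sum_product_right]
    apply Finset.sum_congr rfl
    intro m _
    have h1 : (Finset.range (n + 1)).filter (fun a => a + (k + 2 * m) + 4 ≤ n)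
        = Finset.range (n + 1 - (k + 2 * m + 4)) := by
      ext a
      simp only [Finset.mem_filter, Finset.mem_range]
      omega
    rw [← Finset.sum_filter, h1]
    simp [mul_comm]
  · -- pairwise disjoint
    intro p hp p' hp' hne
    simp only [Finset.disjoint_left]
    intro l hl hl'
    simp only [Finset.mem_image] at hl hl'
    obtain ⟨M, hM, hMe⟩ := hl
    obtain ⟨M', hM', hMe'⟩ := hl'
    obtain ⟨ha, hb, hMM⟩ := word_inj (hMe.trans hMe'.symm)
    apply hne
    have h2 := (mid_counts hM).2.2.1
    have h2' := (mid_counts hM').2.2.1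
    have : p.2 = p'.2 := by rw [← h2, ← h2', hMM]
    exact Prod.ext ha this

theorem w_eq_s7 (n k : ℕ) (hk : 1 ≤ k) :
    w n k = ∑ m ∈ Finset.range (n + 1), (n + 1 - (k + 2 * m + 4)) * Nat.choose (k + m) m := by
  classical
  have hset : {l : List ℕ | Parts12 l ∧ l.sum = n ∧ waterCells l = k} = ↑(DD n k) := by
    ext l
    simp only [Set.mem_setOf_eq, Finset.mem_coe, DD, Finset.mem_biUnion, Finset.mem_image,
      Finset.mem_filter, Finset.mem_product, Finset.mem_range]
    constructor
    · rintro ⟨hp, hsum, hwc⟩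
      obtain ⟨a, b, M, rfl, hpM⟩ := decomp l hp (by omega)
      have hc1 : M.count 1 = k := by rw [← waterCells_wordF a b M]; exact hwc
      set m := M.count 2 with hm
      have hmem : M ∈ mid k m := by rw [← hc1]; exact mem_mid_of hpM
      have hMsum : M.sum = k + 2 * m := (mid_counts hmem).2.2.2.2
      rw [sum_wordF, hMsum] at hsum
      refine ⟨(a, m), ⟨⟨by omega, by omega⟩, by omega⟩, M, hmem, ?_⟩
      congr 1
      omega
    · rintro ⟨p, ⟨⟨hpa, hpm⟩, hple⟩, M, hM, rfl⟩
      obtain ⟨hpM, hc1, hc2, hlen, hMsum⟩ := mid_counts hM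
      refine ⟨parts12_wordF _ _ _ hpM, ?_, ?_⟩
      · rw [sum_wordF, hMsum]
        omega
      · rw [waterCells_wordF, hc1]
  rw [w, hset, Set.ncard_coe_finset, card_DD]

open PowerSeries

noncomputable def A : PowerSeries ℚ := PowerSeries.mk fun n => (n + 1 : ℚ)
noncomputable def B (k : ℕ) : PowerSeries ℚ :=
  PowerSeries.mk fun n => if 2 ∣ n then ((n / 2 + k).choose k : ℚ) else 0

lemma hGeom : ((1 : ℚ⟦X⟧) - X) * PowerSeries.mk (fun _ => (1 : ℚ)) = 1 := by
  ext n
  rw [sub_mul, one_mul, map_sub]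
  cases n with
  | zero => simp
  | succ n => simp [coeff_succ_X_mul]

lemma hA1 : ((1 : ℚ⟦X⟧) - X) * A = PowerSeries.mk (fun _ => (1 : ℚ)) := by
  ext n
  rw [sub_mul, one_mul, map_sub]
  cases n with
  | zero => simp [A]
  | succ n => simp [A, coeff_succ_X_mul]

lemma hA : ((1 : ℚ⟦X⟧) - X) ^ 2 * A = 1 := by
  rw [sq, mul_assoc, hA1, hGeom]

lemma hB0 : ((1 : ℚ⟦X⟧) - X ^ 2) * B 0 = 1 := by
  ext n
  rw [sub_mul, one_mul, map_sub, coeff_X_pow_mul']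
  simp only [B, coeff_mk, coeff_one]
  rcases Nat.even_or_odd n with he | ho
  · obtain ⟨u, rfl⟩ := he
    match u with
    | 0 => norm_num
    | u + 1 =>
      rw [if_pos (by omega : 2 ∣ u + 1 + (u + 1)), if_pos (by omega), if_pos (by omega : 2 ∣ u + 1 + (u + 1) - 2), if_neg (by omega)]
      norm_num
  · obtain ⟨u, rfl⟩ := ho
    simp [show ¬ 2 ∣ 2 * u + 1 by omega, show ¬ 2 * u + 1 = 0 by omega]
    omega

lemma hBstep (k : ℕ) : ((1 : ℚ⟦X⟧) - X ^ 2) * B (k + 1) = B k := by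
  ext n
  rw [sub_mul, one_mul, map_sub, coeff_X_pow_mul']
  simp only [B, coeff_mk]
  rcases Nat.even_or_odd n with he | ho
  · obtain ⟨u, rfl⟩ := he
    have hdd : 2 ∣ u + u := by omega
    match u with
    | 0 => norm_num
    | u + 1 =>
      rw [if_pos hdd, if_pos (by omega), if_pos (by omega : 2 ∣ u + 1 + (u + 1) - 2), if_pos hdd]
      have e1 : (u + 1 + (u + 1)) / 2 = u + 1 := by omega
      have e2 : (u + 1 + (u + 1) - 2) / 2 = u := by omega
      rw [e1, e2]
      have pas : (u + 1 + (k + 1)).choose (k + 1)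
          = (u + (k + 1)).choose k + (u + (k + 1)).choose (k + 1) := by
        rw [show u + 1 + (k + 1) = (u + (k + 1)) + 1 by ring]
        rw [Nat.choose_succ_succ]
      rw [pas]
      push_cast
      have : u + (k + 1) = u + 1 + k := by ring
      rw [this]
      ring
  · obtain ⟨u, rfl⟩ := ho
    simp [show ¬ 2 ∣ 2 * u + 1 by omega]
    intro h1 h2
    exact absurd h2 (by omega)

lemma hB (k : ℕ) : ((1 : ℚ⟦X⟧) - X ^ 2) ^ (k + 1) * B k = 1 := by
  induction k with
  | zero => rw [pow_one]; exact hB0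
  | succ k ih =>
    rw [pow_succ, mul_assoc, hBstep]
    exact ih


theorem w_eq_zero (n k : ℕ) (hk : 1 ≤ k) (hn : n < k + 4) : w n k = 0 := by
  rw [w_eq_s7 n k hk]
  apply Finset.sum_eq_zero
  intro m _
  have : n + 1 - (k + 2 * m + 4) = 0 := by omega
  rw [this, zero_mul]

theorem w_eq' (k j : ℕ) (hk : 1 ≤ k) :
    w (j + k + 4) k = ∑ u ∈ Finset.range (j + 1),
      (u + 1) * (if 2 ∣ (j - u) then (((j - u) / 2 + k).choose k) else 0) := by
  rw [w_eq_s7 (j + k + 4) k hk]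
  have h1 : ∑ m ∈ Finset.range (j + k + 4 + 1), (j + k + 4 + 1 - (k + 2 * m + 4)) * Nat.choose (k + m) m
      = ∑ m ∈ Finset.range (j / 2 + 1), (j - 2 * m + 1) * Nat.choose (m + k) k := by
    rw [← Finset.sum_subset (Finset.range_subset_range.mpr (by omega : j / 2 + 1 ≤ j + k + 4 + 1))]
    · apply Finset.sum_congr rfl
      intro m hm
      rw [Finset.mem_range] at hm
      have e1 : j + k + 4 + 1 - (k + 2 * m + 4) = j - 2 * m + 1 := by omega
      have e2 : Nat.choose (k + m) m = Nat.choose (m + k) k := by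
        have h := Nat.choose_symm (Nat.le_add_right k m)
        simp only [Nat.add_sub_cancel_left] at h
        rw [h, Nat.add_comm k m]
      rw [e1, e2]
    · intro m hm hnm
      rw [Finset.mem_range] at hm
      rw [Finset.mem_range, not_lt] at hnm
      have : j + k + 4 + 1 - (k + 2 * m + 4) = 0 := by omega
      rw [this, zero_mul]
  rw [h1]
  have hR : ∑ u ∈ Finset.range (j + 1),
      (u + 1) * (if 2 ∣ (j - u) then (((j - u) / 2 + k).choose k) else 0)
      = ∑ m ∈ Finset.range (j / 2 + 1), (j - 2 * m + 1) * Nat.choose (m + k) k := by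
    rw [← Finset.sum_range_reflect]
    have h2 : ∀ u ∈ Finset.range (j + 1), (j + 1 - 1 - u + 1) *
        (if 2 ∣ (j - (j + 1 - 1 - u)) then (((j - (j + 1 - 1 - u)) / 2 + k).choose k) else 0)
        = if 2 ∣ u then (j - u + 1) * ((u / 2 + k).choose k) else 0 := by
      intro u hu
      rw [Finset.mem_range] at hu
      have e1 : j + 1 - 1 - u = j - u := by omega
      have e2 : j - (j - u) = u := by omega
      rw [e1, e2]
      split <;> simp
    rw [Finset.sum_congr rfl h2]
    rw [← Finset.sum_filter]
    have h5 : (Finset.range (j + 1)).filter (fun v => 2 ∣ v)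
        = (Finset.range (j / 2 + 1)).image (fun m => 2 * m) := by
      ext v
      simp only [Finset.mem_filter, Finset.mem_range, Finset.mem_image]
      constructor
      · rintro ⟨hv, m, rfl⟩
        exact ⟨m, by omega, rfl⟩
      · rintro ⟨m, hm, rfl⟩
        exact ⟨by omega, m, rfl⟩
    rw [h5, Finset.sum_image (by intro x _ y _ h; simp only at h; omega)]
    apply Finset.sum_congr rfl
    intro m hm
    have : 2 * m / 2 = m := by omega
    rw [this]
  exact hR.symm

theorem stmt7 (k : ℕ) (hk : 1 ≤ k) :
    PowerSeries.mk (fun n => (w n k : ℚ)) =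
      q ^ (k + 4) * ((1 - q) ^ 2 * (1 - q ^ 2) ^ (k + 1))⁻¹ := by
  have hq : q = (PowerSeries.X : ℚ⟦X⟧) := rfl
  rw [hq]
  have hD1 : (A * B k) * ((1 - X) ^ 2 * (1 - X ^ 2) ^ (k + 1)) = 1 := by
    have h : (A * B k) * ((1 - X) ^ 2 * (1 - X ^ 2) ^ (k + 1))
        = ((1 - X) ^ 2 * A) * ((1 - X ^ 2) ^ (k + 1) * B k) := by ring
    rw [h, hA, hB, one_mul]
  have hconst : PowerSeries.constantCoeff (((1 : ℚ⟦X⟧) - X) ^ 2 * (1 - X ^ 2) ^ (k + 1)) ≠ 0 := by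
    simp
  have hinv : (((1 : ℚ⟦X⟧) - X) ^ 2 * (1 - X ^ 2) ^ (k + 1))⁻¹ = A * B k :=
    ((PowerSeries.eq_inv_iff_mul_eq_one hconst).mpr hD1).symm
  rw [hinv]
  ext n
  rw [PowerSeries.coeff_mk, PowerSeries.coeff_X_pow_mul']
  by_cases hn : k + 4 ≤ n
  · rw [if_pos hn]
    obtain ⟨j, rfl⟩ : ∃ j, n = j + k + 4 := ⟨n - (k + 4), by omega⟩
    have hj : j + k + 4 - (k + 4) = j := by omega
    rw [hj, PowerSeries.coeff_mul, Finset.Nat.sum_antidiagonal_eq_sum_range_succ_mk]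
    simp only [A, B, PowerSeries.coeff_mk]
    rw [w_eq' k j hk]
    push_cast
    apply Finset.sum_congr rfl
    intro u hu
    by_cases hd : 2 ∣ (j - u)
    · simp only [if_pos hd]
    · simp only [if_neg hd]
  · rw [if_neg hn]
    rw [w_eq_zero n k hk (by omega)]
    simp
end

section
/- For every k ≥ 1, the unique minimal composition with parts in {1,2} having exactly k water cells is (2, 1^k, 2): that is, w(n,k) = 0 for all n < k+4, and w(k+4, k) = 1. -/
open Classical in
lemma waterCells_eq_card (l : List ℕ) :
    waterCells l = (Finset.univ.filter (fun i : Fin l.length =>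
      l.get i = 1 ∧ (∃ j : Fin l.length, j < i ∧ l.get j = 2) ∧
      (∃ j : Fin l.length, i < j ∧ l.get j = 2))).card := by
  rw [waterCells, ← Set.ncard_coe_finset]
  congr 1
  ext i
  simp

/-- get of the canonical list. -/
lemma Lget (k m : ℕ) (h : m < (2 :: (List.replicate k 1 ++ [2])).length) :
    (2 :: (List.replicate k 1 ++ [2]))[m] = if m = 0 ∨ m = k + 1 then 2 else 1 := by
  have hm : m < k + 2 := by simp at h; omega
  match m with
  | 0 => simp
  | Nat.succ m =>
    rw [List.getElem_cons_succ]
    rcases lt_or_ge m k with h' | h'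
    · rw [List.getElem_append_left (by simpa using h'), List.getElem_replicate]
      rw [if_neg (by omega : ¬(m + 1 = 0 ∨ m + 1 = k + 1))]
    · have hmk : m = k := by omega
      subst hmk
      rw [List.getElem_append_right (by simp)]
      simp

lemma L_sum (k : ℕ) : (2 :: (List.replicate k 1 ++ [2])).sum = k + 4 := by
  simp [List.sum_replicate]
  omega

lemma L_parts12 (k : ℕ) : Parts12 (2 :: (List.replicate k 1 ++ [2])) := by
  intro x hx
  simp [List.mem_cons, List.mem_append, List.mem_replicate] at hx
  rcases hx with h | h | h <;> omega

lemma L_water (k : ℕ) (hk : 1 ≤ k) :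
    waterCells (2 :: (List.replicate k 1 ++ [2])) = k := by
  classical
  set L := 2 :: (List.replicate k 1 ++ [2]) with hL
  have hN : L.length = k + 2 := by simp [hL]
  rw [waterCells_eq_card]
  have h0 : (0 : ℕ) < L.length := by omega
  have hk1 : k + 1 < L.length := by omega
  have hfil : (Finset.univ.filter (fun i : Fin L.length =>
      L.get i = 1 ∧ (∃ j : Fin L.length, j < i ∧ L.get j = 2) ∧
      (∃ j : Fin L.length, i < j ∧ L.get j = 2)))
      = Finset.Ioo (⟨0, h0⟩ : Fin L.length) ⟨k + 1, hk1⟩ := by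
    ext i
    simp only [Finset.mem_filter, Finset.mem_univ, true_and, Finset.mem_Ioo, Fin.lt_def]
    constructor
    · rintro ⟨h1, -, -⟩
      rw [List.get_eq_getElem, Lget] at h1
      by_contra hcon
      have : i.val = 0 ∨ i.val = k + 1 := by
        push_neg at hcon
        have := i.isLt
        omega
      rw [if_pos this] at h1; omega
    · rintro ⟨hi0, hik⟩
      refine ⟨?_, ⟨⟨0, h0⟩, by simpa using hi0, ?_⟩, ⟨⟨k + 1, hk1⟩, by simpa using hik, ?_⟩⟩
      · rw [List.get_eq_getElem, Lget]
        have : ¬(i.val = 0 ∨ i.val = k + 1) := by omega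
        rw [if_neg this]
      · rw [List.get_eq_getElem, Lget]; simp
      · rw [List.get_eq_getElem, Lget]; simp
  rw [hfil, Fin.card_Ioo]
  simp

lemma key (k : ℕ) (hk : 1 ≤ k) (l : List ℕ) (h12 : Parts12 l) (hw : waterCells l = k) :
    k + 4 ≤ l.sum ∧ (l.sum = k + 4 → l = 2 :: (List.replicate k 1 ++ [2])) := by
  classical
  set n := l.length with hn
  set F : Finset (Fin n) := Finset.univ.filter (fun i : Fin n =>
      l.get i = 1 ∧ (∃ j : Fin n, j < i ∧ l.get j = 2) ∧
      (∃ j : Fin n, i < j ∧ l.get j = 2)) with hF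
  have hcard : F.card = k := by
    rw [hF, ← waterCells_eq_card]; exact hw
  have hne : F.Nonempty := Finset.card_pos.mp (by omega)
  obtain ⟨i₀, hi₀⟩ := hne
  rw [hF, Finset.mem_filter] at hi₀
  obtain ⟨-, h1, ⟨a, hai, ha2⟩, ⟨b, hib, hb2⟩⟩ := hi₀
  have haF : a ∉ F := by
    rw [hF, Finset.mem_filter]
    rintro ⟨-, h, -⟩; rw [ha2] at h; omega
  have hbF : b ∉ F := by
    rw [hF, Finset.mem_filter]
    rintro ⟨-, h, -⟩; rw [hb2] at h; omega
  have hab : a ≠ b := (hai.trans hib).ne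
  have haiB : a ∉ insert b F := by
    simp [Finset.mem_insert, hab, haF]
  set T : Finset (Fin n) := insert a (insert b F) with hT
  have hcardT : T.card = k + 2 := by
    rw [hT, Finset.card_insert_of_notMem haiB, Finset.card_insert_of_notMem hbF, hcard]
  have hsumF : ∑ i ∈ F, l.get i = k := by
    rw [Finset.sum_congr rfl (fun i hi => (Finset.mem_filter.mp hi).2.1),
      Finset.sum_const, smul_eq_mul, mul_one, hcard]
  have hsumT : ∑ i ∈ T, l.get i = k + 4 := by
    rw [hT, Finset.sum_insert haiB, Finset.sum_insert hbF, ha2, hb2, hsumF]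
    omega
  have hsumU : ∑ i : Fin n, l.get i = l.sum := by
    simp only [List.get_eq_getElem]
    exact Fin.sum_univ_getElem l
  have hle : ∑ i ∈ T, l.get i ≤ ∑ i : Fin n, l.get i :=
    Finset.sum_le_sum_of_subset (Finset.subset_univ T)
  have hge : k + 4 ≤ l.sum := by omega
  refine ⟨hge, fun hs => ?_⟩
  -- equality case
  have hsd : ∑ i ∈ Finset.univ \ T, l.get i = 0 := by
    have h' : ∑ i ∈ Finset.univ \ T, l.get i + ∑ i ∈ T, l.get i = ∑ i : Fin n, l.get i :=
      Finset.sum_sdiff (Finset.subset_univ T)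
    omega
  have hTuniv : T = Finset.univ := by
    refine Finset.Subset.antisymm (Finset.subset_univ T) ?_
    intro i _
    by_contra hiT
    have hpos : 0 < l.get i := by
      rcases h12 (l.get i) (List.get_mem l i) with h | h <;> omega
    have hz : l.get i = 0 :=
      (Finset.sum_eq_zero_iff.mp hsd) i (Finset.mem_sdiff.mpr ⟨Finset.mem_univ i, hiT⟩)
    omega
  have hn2 : n = k + 2 := by
    have h := Finset.card_univ (α := Fin n)
    rw [← hTuniv, hcardT, Fintype.card_fin] at h
    omega
  have hmemT : ∀ i : Fin n, i = a ∨ i = b ∨ i ∈ F := by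
    intro i
    have hi : i ∈ T := hTuniv ▸ Finset.mem_univ i
    simpa [hT, Finset.mem_insert] using hi
  have h2ab : ∀ j : Fin n, l.get j = 2 → j = a ∨ j = b := by
    intro j hj
    rcases hmemT j with h | h | h
    · exact Or.inl h
    · exact Or.inr h
    · exfalso
      rw [hF, Finset.mem_filter] at h
      omega
  have hab' : a < b := hai.trans hib
  have hFab : ∀ i ∈ F, a < i ∧ i < b := by
    intro i hi
    rw [hF, Finset.mem_filter] at hi
    obtain ⟨-, -, ⟨p, hpi, hp2⟩, q, hiq, hq2⟩ := hi
    rcases h2ab p hp2 with rfl | rfl <;> rcases h2ab q hq2 with rfl | rfl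
    · exact absurd (hpi.trans hiq) (lt_irrefl _)
    · exact ⟨hpi, hiq⟩
    · exact absurd (hab'.trans (hpi.trans hiq)) (lt_irrefl _)
    · exact absurd (hpi.trans hiq) (lt_irrefl _)
  have hFsub : F ⊆ Finset.Ioo a b := fun i hi => Finset.mem_Ioo.mpr (hFab i hi)
  have hIooCard : (Finset.Ioo a b).card = b.val - a.val - 1 := Fin.card_Ioo a b
  have hcle : k ≤ b.val - a.val - 1 := by
    have := Finset.card_le_card hFsub
    omega
  have hbval : b.val = k + 1 ∧ a.val = 0 := by
    have h1 := b.isLt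
    have h2 := Fin.lt_def.mp hab'
    omega
  have hFeq : F = Finset.Ioo a b :=
    Finset.eq_of_subset_of_card_le hFsub (by omega)
  apply List.ext_get
  · simpa using hn2
  intro m h1 h2
  rw [List.get_eq_getElem, List.get_eq_getElem, Lget]
  have hrfl : l[m] = l.get (⟨m, h1⟩ : Fin n) := rfl
  by_cases hm0 : m = 0
  · have hia : (⟨m, h1⟩ : Fin n) = a := Fin.ext (show m = a.val by omega)
    rw [hrfl, hia, ha2, if_pos (Or.inl hm0)]
  · by_cases hmk : m = k + 1
    · have hib' : (⟨m, h1⟩ : Fin n) = b := Fin.ext (show m = b.val by omega)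
      rw [hrfl, hib', hb2, if_pos (Or.inr hmk)]
    · have hmlt : m < k + 2 := by omega
      have hiF : (⟨m, h1⟩ : Fin n) ∈ F := by
        rw [hFeq, Finset.mem_Ioo, Fin.lt_def, Fin.lt_def]
        show a.val < m ∧ m < b.val
        omega
      rw [hF, Finset.mem_filter] at hiF
      rw [hrfl, hiF.2.1, if_neg (by omega : ¬(m = 0 ∨ m = k + 1))]

theorem stmt8 (k : ℕ) (hk : 1 ≤ k) :
    (∀ n < k + 4, w n k = 0) ∧ w (k + 4) k = 1 := by
  constructor
  · intro n hn
    have : {l : List ℕ | Parts12 l ∧ l.sum = n ∧ waterCells l = k} = ∅ := by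
      ext l
      simp only [Set.mem_setOf_eq, Set.mem_empty_iff_false, iff_false]
      rintro ⟨h12, hsum, hwc⟩
      have := (key k hk l h12 hwc).1
      omega
    rw [w, this, Set.ncard_empty]
  · have : {l : List ℕ | Parts12 l ∧ l.sum = k + 4 ∧ waterCells l = k}
        = {2 :: (List.replicate k 1 ++ [2])} := by
      ext l
      simp only [Set.mem_setOf_eq, Set.mem_singleton_iff]
      constructor
      · rintro ⟨h12, hsum, hwc⟩
        exact (key k hk l h12 hwc).2 hsum
      · rintro rfl
        exact ⟨L_parts12 k, L_sum k, L_water k hk⟩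
    rw [w, this, Set.ncard_singleton]
end

section
/- For every n ≥ 5, w(n,1) = w(n-2,1) + w(n-3,0) - 1, where w(n,k) counts compositions of n with parts in {1,2} having exactly k water cells. -/
def WS (l : List ℕ) : Set ℕ :=
  {i | i < l.length ∧ l.getD i 0 = 1 ∧ (∃ j, j < i ∧ l.getD j 0 = 2) ∧
    (∃ j, i < j ∧ j < l.length ∧ l.getD j 0 = 2)}

lemma waterCells_eq_WS (l : List ℕ) : waterCells l = (WS l).ncard := by
  unfold waterCells
  rw [← Set.ncard_image_of_injective _ (Fin.val_injective (n := l.length))]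
  congr 1
  ext i
  simp only [Set.mem_image, Set.mem_setOf_eq, WS]
  constructor
  · rintro ⟨⟨i, hi⟩, ⟨h1, ⟨⟨j, hj⟩, hlt, h2⟩, ⟨⟨k, hk⟩, hltk, h3⟩⟩, rfl⟩
    refine ⟨hi, ?_, ⟨j, hlt, ?_⟩, ⟨k, hltk, hk, ?_⟩⟩
    · rw [List.getD_eq_getElem _ _ hi]; exact h1
    · rw [List.getD_eq_getElem _ _ hj]; exact h2
    · rw [List.getD_eq_getElem _ _ hk]; exact h3
  · rintro ⟨hi, h1, ⟨j, hj, h2⟩, ⟨k, hk, hkl, h3⟩⟩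
    refine ⟨⟨i, hi⟩, ⟨?_, ⟨⟨j, lt_trans hj hi⟩, hj, ?_⟩, ⟨⟨k, hkl⟩, hk, ?_⟩⟩, rfl⟩
    · rw [List.get_eq_getElem, ← List.getD_eq_getElem _ 0 hi]; exact h1
    · rw [List.get_eq_getElem, ← List.getD_eq_getElem _ 0 (lt_trans hj hi)]; exact h2
    · rw [List.get_eq_getElem, ← List.getD_eq_getElem _ 0 hkl]; exact h3

lemma getD_rep (v a i : ℕ) : (List.replicate a v).getD i 0 = if i < a then v else 0 := by
  induction a generalizing i with
  | zero => simp
  | succ a ih =>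
    cases i with
    | zero => rw [List.replicate_succ]; simp
    | succ i =>
      rw [List.replicate_succ, List.getD_cons_succ, ih]
      simp [Nat.succ_lt_succ_iff]

lemma getD_rep_append (v m i : ℕ) (s : List ℕ) :
    (List.replicate m v ++ s).getD i 0 = if i < m then v else s.getD (i - m) 0 := by
  rcases lt_or_ge i m with h | h
  · rw [List.getD_append _ _ _ _ (by simpa using h), getD_rep, if_pos h, if_pos h]
  · rw [List.getD_append_right _ _ _ _ (by simpa using h), if_neg (by omega),
      List.length_replicate]

def f0 (a b c : ℕ) : List ℕ :=
  List.replicate a 1 ++ (List.replicate b 2 ++ List.replicate c 1)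

def f1 (a b c d : ℕ) : List ℕ :=
  List.replicate a 1 ++ (List.replicate b 2 ++ (List.replicate 1 1 ++
    (List.replicate c 2 ++ List.replicate d 1)))

lemma length_f0 (a b c : ℕ) : (f0 a b c).length = a + b + c := by
  simp [f0]; omega

lemma length_f1 (a b c d : ℕ) : (f1 a b c d).length = a + b + 1 + c + d := by
  simp [f1]; omega

lemma sum_f0 (a b c : ℕ) : (f0 a b c).sum = a + 2 * b + c := by
  simp [f0, List.sum_replicate, smul_eq_mul]; ring

lemma sum_f1 (a b c d : ℕ) : (f1 a b c d).sum = a + 2 * b + 1 + 2 * c + d := by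
  simp [f1, List.sum_replicate, smul_eq_mul]; ring

lemma parts12_f0 (a b c : ℕ) : Parts12 (f0 a b c) := by
  intro x hx
  simp [f0, List.mem_replicate] at hx
  omega

lemma parts12_f1 (a b c d : ℕ) : Parts12 (f1 a b c d) := by
  intro x hx
  simp [f1, List.mem_replicate] at hx
  omega

lemma getD_f0 (a b c i : ℕ) : (f0 a b c).getD i 0 =
    if i < a then 1 else if i - a < b then 2 else if i - a - b < c then 1 else 0 := by
  simp only [f0, getD_rep_append, getD_rep]

lemma getD_f1 (a b c d i : ℕ) : (f1 a b c d).getD i 0 =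
    if i < a then 1 else if i - a < b then 2 else if i - a - b < 1 then 1
      else if i - a - b - 1 < c then 2 else if i - a - b - 1 - c < d then 1 else 0 := by
  simp only [f1, getD_rep_append, getD_rep]

set_option maxHeartbeats 800000 in
lemma WS_f0 (a b c : ℕ) : WS (f0 a b c) = ∅ := by
  ext i
  simp only [WS, Set.mem_setOf_eq, Set.mem_empty_iff_false, iff_false, not_exists]
  rintro ⟨hi, h1, ⟨j, hj, h2⟩, ⟨k, hk, hkl, h3⟩⟩
  rw [length_f0] at hi hkl
  rw [getD_f0] at h1 h2 h3
  split_ifs at h1 h2 h3 <;> omega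

set_option maxHeartbeats 1600000 in
lemma WS_f1 (a b c d : ℕ) (hb : 1 ≤ b) (hc : 1 ≤ c) :
    WS (f1 a b c d) = {a + b} := by
  ext i
  simp only [WS, Set.mem_setOf_eq, Set.mem_singleton_iff]
  constructor
  · rintro ⟨hi, h1, ⟨j, hj, h2⟩, ⟨k, hk, hkl, h3⟩⟩
    rw [length_f1] at hi hkl
    rw [getD_f1] at h1 h2 h3
    split_ifs at h1 h2 h3 <;> omega
  · rintro rfl
    rw [length_f1]
    refine ⟨by omega, ?_, ⟨a, by omega, ?_⟩, ⟨a + b + 1, by omega, by omega, ?_⟩⟩ <;>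
      (rw [getD_f1]; split_ifs <;> omega)

lemma waterCells_f0 (a b c : ℕ) : waterCells (f0 a b c) = 0 := by
  rw [waterCells_eq_WS, WS_f0, Set.ncard_empty]

lemma waterCells_f1 (a b c d : ℕ) (hb : 1 ≤ b) (hc : 1 ≤ c) :
    waterCells (f1 a b c d) = 1 := by
  rw [waterCells_eq_WS, WS_f1 a b c d hb hc, Set.ncard_singleton]

lemma takeWhile_rep (p : ℕ → Bool) (v m : ℕ) (hv : p v = true) :
    List.takeWhile p (List.replicate m v) = List.replicate m v := by
  induction m with
  | zero => simp
  | succ m ih => rw [List.replicate_succ, List.takeWhile_cons_of_pos hv, ih]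

lemma takeWhile_rep_cons (p : ℕ → Bool) (v y m : ℕ) (s : List ℕ)
    (hv : p v = true) (hy : p y = false) :
    List.takeWhile p (List.replicate m v ++ y :: s) = List.replicate m v := by
  induction m with
  | zero => simp [List.takeWhile_cons_of_neg, hy]
  | succ m ih =>
    rw [List.replicate_succ, List.cons_append, List.takeWhile_cons_of_pos hv, ih]

lemma pairwise_form (l : List ℕ) (h12 : ∀ x ∈ l, x = 1 ∨ x = 2)
    (hp : l.Pairwise (fun x y => ¬(x = 1 ∧ y = 2))) :
    ∃ b c, l = List.replicate b 2 ++ List.replicate c 1 := by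
  induction l with
  | nil => exact ⟨0, 0, by simp⟩
  | cons x t ih =>
    rw [List.pairwise_cons] at hp
    rcases h12 x (by simp) with rfl | rfl
    · refine ⟨0, t.length + 1, ?_⟩
      have ht : t = List.replicate t.length 1 := by
        rw [List.eq_replicate_iff]
        refine ⟨rfl, fun y hy => ?_⟩
        rcases h12 y (by simp [hy]) with rfl | rfl
        · rfl
        · exact absurd ⟨rfl, rfl⟩ (hp.1 2 hy)
      rw [List.replicate_succ]
      simpa using ht
    · obtain ⟨b, c, rfl⟩ := ih (fun y hy => h12 y (by simp [hy])) hp.2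
      exact ⟨b + 1, c, by rw [List.replicate_succ]; simp⟩

lemma dec_lemma (l : List ℕ) (h12 : Parts12 l) (h2 : 2 ∈ l) :
    ∃ a r, (∀ p < a, l.getD p 0 = 1) ∧ l = List.replicate a 1 ++ 2 :: r := by
  set t := l.takeWhile (· == 1) with ht
  set r0 := l.dropWhile (· == 1) with hr0
  have htr : t ++ r0 = l := List.takeWhile_append_dropWhile
  have htrep : t = List.replicate t.length 1 := by
    rw [List.eq_replicate_iff]
    exact ⟨rfl, fun y hy => by simpa using List.mem_takeWhile_imp hy⟩
  have hr0ne : r0 ≠ [] := by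
    intro h
    rw [hr0, List.dropWhile_eq_nil_iff] at h
    simpa using h 2 h2
  obtain ⟨y, s, hys⟩ : ∃ y s, r0 = y :: s := List.exists_cons_of_ne_nil hr0ne
  have hy1 : y ≠ 1 := by
    have h3 := List.head?_dropWhile_not (· == 1) l
    rw [← hr0, hys] at h3
    simpa using h3
  have hy2 : y = 2 := by
    have hmem : y ∈ l := by rw [← htr, hys]; simp
    rcases h12 y hmem with h | h
    · exact absurd h hy1
    · exact h
  have hl : l = List.replicate t.length 1 ++ 2 :: s := by
    conv_lhs => rw [← htr, hys, hy2]
    exact congrArg (fun z => z ++ 2 :: s) htrep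
  refine ⟨t.length, s, fun p hp => ?_, hl⟩
  rw [hl, getD_rep_append, if_pos hp]

lemma struct0 (l : List ℕ) (h12 : Parts12 l) (hW : WS l = ∅) :
    ∃ a b c, l = f0 a b c := by
  by_cases h2 : 2 ∈ l
  · obtain ⟨a, r, hpre, hl⟩ := dec_lemma l h12 h2
    have hlen : l.length = a + 1 + r.length := by rw [hl]; simp; omega
    have hgetD : ∀ q : ℕ, l.getD (a + 1 + q) 0 = r.getD q 0 := by
      intro q
      rw [hl, getD_rep_append, if_neg (by omega)]
      have : a + 1 + q - a = q + 1 := by omega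
      rw [this, List.getD_cons_succ]
    have hgetDa : l.getD a 0 = 2 := by
      rw [hl, getD_rep_append, if_neg (by omega)]
      simp
    have hP : r.Pairwise (fun x y => ¬(x = 1 ∧ y = 2)) := by
      rw [List.pairwise_iff_getElem]
      intro p q hp hq hpq
      rintro ⟨e1, e2⟩
      have hmem : (a + 1 + p) ∈ WS l := by
        refine ⟨by omega, ?_, ⟨a, by omega, hgetDa⟩, ⟨a + 1 + q, by omega, by omega, ?_⟩⟩
        · rw [hgetD p, List.getD_eq_getElem _ _ hp]; exact e1
        · rw [hgetD q, List.getD_eq_getElem _ _ hq]; exact e2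
      rw [hW] at hmem
      exact hmem
    have h12r : ∀ x ∈ r, x = 1 ∨ x = 2 := fun x hx => h12 x (by rw [hl]; simp [hx])
    obtain ⟨b, c, rfl⟩ := pairwise_form r h12r hP
    refine ⟨a, b + 1, c, ?_⟩
    rw [hl]
    simp [f0, List.replicate_succ]
  · have hrep : l = List.replicate l.length 1 := by
      rw [List.eq_replicate_iff]
      exact ⟨rfl, fun y hy => (h12 y hy).resolve_right (by rintro rfl; exact h2 hy)⟩
    exact ⟨l.length, 0, 0, by simp only [f0, List.append_nil, List.replicate_zero]; exact hrep⟩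

lemma struct1 (l : List ℕ) (h12 : Parts12 l) (i0 : ℕ) (hW : WS l = {i0}) :
    ∃ a b c d, 1 ≤ b ∧ 1 ≤ c ∧ l = f1 a b c d := by
  have hi0 : i0 ∈ WS l := by rw [hW]; rfl
  obtain ⟨hi0len, h1, ⟨j1, hj1, e1⟩, ⟨j2, hj2, hj2l, e2⟩⟩ := hi0
  have h2l : 2 ∈ l := by
    rw [List.getD_eq_getElem _ _ (by omega : j1 < l.length)] at e1
    rw [← e1]
    exact List.getElem_mem _
  obtain ⟨a, r, hpre, hl⟩ := dec_lemma l h12 h2l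
  have hlen : l.length = a + 1 + r.length := by rw [hl]; simp; omega
  have hgetD : ∀ q : ℕ, l.getD (a + 1 + q) 0 = r.getD q 0 := by
    intro q
    rw [hl, getD_rep_append, if_neg (by omega)]
    have : a + 1 + q - a = q + 1 := by omega
    rw [this, List.getD_cons_succ]
  have hgetDa : l.getD a 0 = 2 := by
    rw [hl, getD_rep_append, if_neg (by omega)]
    simp
  have hai0 : a < i0 := by
    have haj1 : a ≤ j1 := by
      by_contra h
      push_neg at h
      have := hpre j1 h
      omega
    omega
  set m := i0 - a - 1 with hm
  have hmr : m < r.length := by omega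
  have hrm : r.getD m 0 = 1 := by
    rw [← hgetD]
    have : a + 1 + m = i0 := by omega
    rw [this]
    exact h1
  have claim1 : ∀ q, q < m → r.getD q 0 = 2 := by
    intro q hq
    have hpl : a + 1 + q < l.length := by omega
    have hmemval : l.getD (a + 1 + q) 0 = 1 ∨ l.getD (a + 1 + q) 0 = 2 := by
      rw [List.getD_eq_getElem _ _ hpl]
      exact h12 _ (List.getElem_mem _)
    rcases hmemval with h | h
    · exfalso
      have hmem : (a + 1 + q) ∈ WS l :=
        ⟨hpl, h, ⟨a, by omega, hgetDa⟩, ⟨j2, by omega, hj2l, e2⟩⟩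
      rw [hW] at hmem
      have : a + 1 + q = i0 := hmem
      omega
    · rw [← hgetD]; exact h
  have claim2 : ∀ p q, i0 < p → p < q → q < l.length →
      ¬(l.getD p 0 = 1 ∧ l.getD q 0 = 2) := by
    rintro p q hp hpq hql ⟨ep, eq'⟩
    have hmem : p ∈ WS l := ⟨by omega, ep, ⟨a, by omega, hgetDa⟩, ⟨q, hpq, hql, eq'⟩⟩
    rw [hW] at hmem
    have : p = i0 := hmem
    omega
  have hrtake : r.take m = List.replicate m 2 := by
    rw [List.eq_replicate_iff]
    constructor
    · rw [List.length_take]; omega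
    · intro y hy
      obtain ⟨q, hq, hq2⟩ := List.mem_iff_getElem.1 hy
      have hqm : q < m := by rw [List.length_take] at hq; omega
      rw [List.getElem_take] at hq2
      rw [← hq2, ← List.getD_eq_getElem _ 0 (by omega)]
      exact claim1 q hqm
  set u := r.drop (m + 1) with hu
  have hulen : u.length = r.length - (m + 1) := by rw [hu, List.length_drop]
  have hrdrop : r.drop m = 1 :: u := by
    rw [List.drop_eq_getElem_cons hmr]
    congr 1
    rw [← List.getD_eq_getElem _ 0 hmr]
    exact hrm
  have hr : r = List.replicate m 2 ++ 1 :: u := by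
    conv_lhs => rw [← List.take_append_drop m r]
    rw [hrtake, hrdrop]
  have hul : ∀ k, k < u.length → u.getD k 0 = l.getD (i0 + 1 + k) 0 := by
    intro k hk
    have hk' : m + 1 + k < r.length := by omega
    have e3 : u.getD k 0 = r.getD (m + 1 + k) 0 := by
      rw [List.getD_eq_getElem _ _ hk, List.getD_eq_getElem _ _ hk']
      exact List.getElem_drop (xs := r) (i := m + 1) (j := k) (h := by rw [← hu]; exact hk)
    have e4 : i0 + 1 + k = a + 1 + (m + 1 + k) := by omega
    rw [e3, e4, hgetD]
  have hu12 : ∀ x ∈ u, x = 1 ∨ x = 2 := by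
    intro x hx
    have hxr : x ∈ r := List.mem_of_mem_drop hx
    exact h12 x (by rw [hl]; simp [hxr])
  have huP : u.Pairwise (fun x y => ¬(x = 1 ∧ y = 2)) := by
    rw [List.pairwise_iff_getElem]
    intro p q hp hq hpq
    rintro ⟨ep, eq'⟩
    refine claim2 (i0 + 1 + p) (i0 + 1 + q) (by omega) (by omega) (by omega) ⟨?_, ?_⟩
    · rw [← hul p hp, List.getD_eq_getElem _ _ hp]; exact ep
    · rw [← hul q hq, List.getD_eq_getElem _ _ hq]; exact eq'
  obtain ⟨c', dd, hudecomp⟩ := pairwise_form u hu12 huP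
  have hc' : 1 ≤ c' := by
    by_contra h
    push_neg at h
    have hc0 : c' = 0 := by omega
    subst hc0
    have hk : j2 - i0 - 1 < u.length := by omega
    have h2u : u.getD (j2 - i0 - 1) 0 = 2 := by
      rw [hul _ hk]
      have : i0 + 1 + (j2 - i0 - 1) = j2 := by omega
      rw [this]
      exact e2
    rw [hudecomp] at h2u
    simp only [List.replicate_zero, List.nil_append, getD_rep] at h2u
    split_ifs at h2u <;> omega
  refine ⟨a, m + 1, c', dd, by omega, hc', ?_⟩
  rw [hl, hr, hudecomp]
  simp [f1, List.replicate_succ]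

lemma lead1_f0 (a b c : ℕ) (hb : 1 ≤ b) :
    ((f0 a b c).takeWhile (· == 1)).length = a := by
  obtain ⟨b', rfl⟩ : ∃ b', b = b' + 1 := ⟨b - 1, by omega⟩
  have : f0 a (b' + 1) c = List.replicate a 1 ++ 2 :: (List.replicate b' 2 ++
      List.replicate c 1) := by
    simp [f0, List.replicate_succ]
  rw [this, takeWhile_rep_cons _ _ _ _ _ (by decide) (by decide), List.length_replicate]

lemma count2_f0 (a b c : ℕ) : (f0 a b c).count 2 = b := by
  simp [f0, List.count_append, List.count_replicate]

lemma f0_inj (a b c a' b' c' : ℕ) (hb : 1 ≤ b) (hb' : 1 ≤ b')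
    (h : f0 a b c = f0 a' b' c') : a = a' ∧ b = b' := by
  constructor
  · rw [← lead1_f0 a b c hb, ← lead1_f0 a' b' c' hb', h]
  · rw [← count2_f0 a b c, ← count2_f0 a' b' c', h]

lemma lead1_f1 (a b c d : ℕ) (hb : 1 ≤ b) :
    ((f1 a b c d).takeWhile (· == 1)).length = a := by
  obtain ⟨b', rfl⟩ : ∃ b', b = b' + 1 := ⟨b - 1, by omega⟩
  have : f1 a (b' + 1) c d = List.replicate a 1 ++ 2 :: (List.replicate b' 2 ++
      (List.replicate 1 1 ++ (List.replicate c 2 ++ List.replicate d 1))) := by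
    simp [f1, List.replicate_succ]
  rw [this, takeWhile_rep_cons _ _ _ _ _ (by decide) (by decide), List.length_replicate]

lemma lead2_f1 (a b c d : ℕ) :
    (((f1 a b c d).drop a).takeWhile (· == 2)).length = b := by
  have hdrop : (f1 a b c d).drop a = List.replicate b 2 ++ 1 ::
      (List.replicate c 2 ++ List.replicate d 1) := by
    rw [f1, List.drop_left' List.length_replicate]
    simp
  rw [hdrop, takeWhile_rep_cons _ _ _ _ _ (by decide) (by decide), List.length_replicate]

lemma lead3_f1 (a b c d : ℕ) :
    (((f1 a b c d).drop (a + b + 1)).takeWhile (· == 2)).length = c := by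
  have hassoc : f1 a b c d = (List.replicate a 1 ++ (List.replicate b 2 ++
      List.replicate 1 1)) ++ (List.replicate c 2 ++ List.replicate d 1) := by
    simp [f1]
  have hdrop : (f1 a b c d).drop (a + b + 1) =
      List.replicate c 2 ++ List.replicate d 1 := by
    rw [hassoc, List.drop_left' (by simp; omega)]
  rw [hdrop]
  cases d with
  | zero =>
    rw [List.replicate_zero, List.append_nil, takeWhile_rep _ _ _ (by decide),
      List.length_replicate]
  | succ d' =>
    rw [List.replicate_succ, takeWhile_rep_cons _ _ _ _ _ (by decide) (by decide),
      List.length_replicate]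

lemma f1_inj (a b c d a' b' c' d' : ℕ) (hb : 1 ≤ b) (hb' : 1 ≤ b')
    (h : f1 a b c d = f1 a' b' c' d') : a = a' ∧ b = b' ∧ c = c' := by
  have ha : a = a' := by rw [← lead1_f1 a b c d hb, ← lead1_f1 a' b' c' d' hb', h]
  refine ⟨ha, ?_, ?_⟩
  · rw [← lead2_f1 a b c d, ← lead2_f1 a' b' c' d', h, ha]
  · rw [← lead3_f1 a b c d, ← lead3_f1 a' b' c' d', h, ha, show b = b' by
      rw [← lead2_f1 a b c d, ← lead2_f1 a' b' c' d', h, ha]]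

def P0 (n : ℕ) : Finset (ℕ × ℕ) :=
  (Finset.range (n + 1) ×ˢ Finset.range (n + 1)).filter fun p => 1 ≤ p.2 ∧ p.1 + 2 * p.2 ≤ n

def P1 (n : ℕ) : Finset (ℕ × ℕ × ℕ) :=
  (Finset.range (n + 1) ×ˢ Finset.range (n + 1) ×ˢ Finset.range (n + 1)).filter
    fun p => 1 ≤ p.2.1 ∧ 1 ≤ p.2.2 ∧ p.1 + 2 * p.2.1 + 2 * p.2.2 + 1 ≤ n

lemma mem_P0 (n : ℕ) (p : ℕ × ℕ) : p ∈ P0 n ↔ 1 ≤ p.2 ∧ p.1 + 2 * p.2 ≤ n := by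
  simp only [P0, Finset.mem_filter, Finset.mem_product, Finset.mem_range]
  omega

lemma mem_P1 (n : ℕ) (p : ℕ × ℕ × ℕ) :
    p ∈ P1 n ↔ 1 ≤ p.2.1 ∧ 1 ≤ p.2.2 ∧ p.1 + 2 * p.2.1 + 2 * p.2.2 + 1 ≤ n := by
  simp only [P1, Finset.mem_filter, Finset.mem_product, Finset.mem_range]
  omega

lemma WS_finite (l : List ℕ) : (WS l).Finite :=
  (Set.finite_Iio l.length).subset fun _ hi => hi.1

lemma w0_eq (n : ℕ) : w n 0 = (P0 n).card + 1 := by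
  classical
  have hset : {l : List ℕ | Parts12 l ∧ l.sum = n ∧ waterCells l = 0} =
      ↑(insert (List.replicate n 1)
        ((P0 n).image fun p => f0 p.1 p.2 (n - p.1 - 2 * p.2))) := by
    ext l
    simp only [Set.mem_setOf_eq, Finset.coe_insert, Set.mem_insert_iff, Finset.mem_coe,
      Finset.mem_image, mem_P0]
    constructor
    · rintro ⟨h12, hsum, hwc⟩
      have hWS : WS l = ∅ := by
        rw [waterCells_eq_WS] at hwc
        exact (Set.ncard_eq_zero (WS_finite l)).1 hwc
      obtain ⟨a, b, c, rfl⟩ := struct0 l h12 hWS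
      rw [sum_f0] at hsum
      rcases Nat.eq_zero_or_pos b with rfl | hb
      · left
        show f0 a 0 c = List.replicate n 1
        have hac : a + c = n := by omega
        simp only [f0, List.replicate_zero, List.nil_append, ← List.replicate_add, hac]
      · right
        refine ⟨(a, b), ⟨hb, show a + 2 * b ≤ n by omega⟩, ?_⟩
        show f0 a b (n - a - 2 * b) = f0 a b c
        congr 1
        omega
    · rintro (rfl | ⟨⟨a, b⟩, ⟨hb, hab⟩, rfl⟩)
      · refine ⟨fun x hx => Or.inl (List.eq_of_mem_replicate hx),
          by simp [List.sum_replicate], ?_⟩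
        have : List.replicate n 1 = f0 n 0 0 := by simp [f0]
        rw [this, waterCells_f0]
      · exact ⟨parts12_f0 _ _ _, by rw [sum_f0]; omega, waterCells_f0 _ _ _⟩
  have hnm : List.replicate n 1 ∉
      (P0 n).image fun p => f0 p.1 p.2 (n - p.1 - 2 * p.2) := by
    rw [Finset.mem_image]
    rintro ⟨p, hp, heq⟩
    rw [mem_P0] at hp
    have h1 : (f0 p.1 p.2 (n - p.1 - 2 * p.2)).count 2 = p.2 := count2_f0 _ _ _
    rw [heq] at h1
    rw [List.count_replicate] at h1
    rw [if_neg (by decide : ¬((1 : ℕ) == 2) = true)] at h1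
    omega
  have hinj : Set.InjOn (fun p : ℕ × ℕ => f0 p.1 p.2 (n - p.1 - 2 * p.2)) ↑(P0 n) := by
    rintro ⟨a, b⟩ h ⟨a', b'⟩ h' heq
    rw [Finset.mem_coe, mem_P0] at h h'
    obtain ⟨ha, hb⟩ := f0_inj _ _ _ _ _ _ h.1 h'.1 heq
    simp only [Prod.mk.injEq]
    exact ⟨ha, hb⟩
  rw [w, hset, Set.ncard_coe_finset, Finset.card_insert_of_notMem hnm,
    Finset.card_image_of_injOn hinj]

lemma w1_eq (n : ℕ) : w n 1 = (P1 n).card := by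
  classical
  have hset : {l : List ℕ | Parts12 l ∧ l.sum = n ∧ waterCells l = 1} =
      ↑((P1 n).image fun p =>
        f1 p.1 p.2.1 p.2.2 (n - p.1 - 2 * p.2.1 - 2 * p.2.2 - 1)) := by
    ext l
    simp only [Set.mem_setOf_eq, Finset.mem_coe, Finset.mem_image, mem_P1]
    constructor
    · rintro ⟨h12, hsum, hwc⟩
      rw [waterCells_eq_WS] at hwc
      obtain ⟨i0, hWS⟩ := Set.ncard_eq_one.1 hwc
      obtain ⟨a, b, c, d, hb, hc, rfl⟩ := struct1 l h12 i0 hWS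
      rw [sum_f1] at hsum
      refine ⟨(a, b, c), ⟨hb, hc, show a + 2 * b + 2 * c + 1 ≤ n by omega⟩, ?_⟩
      show f1 a b c (n - a - 2 * b - 2 * c - 1) = f1 a b c d
      congr 1
      omega
    · rintro ⟨⟨a, b, c⟩, ⟨hb, hc, habc⟩, rfl⟩
      have habc' : a + 2 * b + 2 * c + 1 ≤ n := habc
      exact ⟨parts12_f1 _ _ _ _, by rw [sum_f1]; omega, waterCells_f1 _ _ _ _ hb hc⟩
  have hinj : Set.InjOn
      (fun p : ℕ × ℕ × ℕ => f1 p.1 p.2.1 p.2.2 (n - p.1 - 2 * p.2.1 - 2 * p.2.2 - 1))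
      ↑(P1 n) := by
    rintro ⟨a, b, c⟩ h ⟨a', b', c'⟩ h' heq
    rw [Finset.mem_coe, mem_P1] at h h'
    obtain ⟨ha, hb, hc⟩ := f1_inj _ _ _ _ _ _ _ _ h.1 h'.1 heq
    simp only [Prod.mk.injEq]
    exact ⟨ha, hb, hc⟩
  rw [w, hset, Set.ncard_coe_finset, Finset.card_image_of_injOn hinj]

lemma card_rec (n : ℕ) (hn : 5 ≤ n) :
    (P1 n).card = (P1 (n - 2)).card + (P0 (n - 3)).card := by
  classical
  rw [← Finset.card_filter_add_card_filter_not
    (s := P1 n) (p := fun p : ℕ × ℕ × ℕ => 2 ≤ p.1)]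
  congr 1
  · refine Finset.card_bij' (fun p _ => (p.1 - 2, p.2.1, p.2.2))
      (fun q _ => (q.1 + 2, q.2.1, q.2.2)) ?_ ?_ ?_ ?_
    · rintro ⟨a, b, c⟩ ha
      rw [Finset.mem_filter, mem_P1] at ha
      rw [mem_P1]
      dsimp only at ha ⊢
      omega
    · rintro ⟨a, b, c⟩ ha
      rw [mem_P1] at ha
      rw [Finset.mem_filter, mem_P1]
      dsimp only at ha ⊢
      omega
    · rintro ⟨a, b, c⟩ ha
      rw [Finset.mem_filter, mem_P1] at ha
      dsimp only at ha ⊢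
      simp only [Prod.mk.injEq, and_true, true_and]
      omega
    · rintro ⟨a, b, c⟩ ha
      simp only [Prod.mk.injEq, and_true, true_and]
      omega
  · refine Finset.card_bij' (fun p _ => (p.1 + 2 * (p.2.2 - 1), p.2.1))
      (fun q _ => (q.1 % 2, q.2, q.1 / 2 + 1)) ?_ ?_ ?_ ?_
    · rintro ⟨a, b, c⟩ ha
      rw [Finset.mem_filter, mem_P1] at ha
      rw [mem_P0]
      dsimp only at ha ⊢
      omega
    · rintro ⟨a, b⟩ ha
      rw [mem_P0] at ha
      rw [Finset.mem_filter, mem_P1]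
      dsimp only at ha ⊢
      omega
    · rintro ⟨a, b, c⟩ ha
      rw [Finset.mem_filter, mem_P1] at ha
      dsimp only at ha ⊢
      simp only [Prod.mk.injEq, and_true, true_and]
      omega
    · rintro ⟨a, b⟩ ha
      rw [mem_P0] at ha
      dsimp only at ha ⊢
      simp only [Prod.mk.injEq, and_true, true_and]
      omega

theorem stmt9 (n : ℕ) (hn : 5 ≤ n) :
    (w n 1 : ℤ) = w (n - 2) 1 + w (n - 3) 0 - 1 := by
  rw [w1_eq n, w1_eq (n - 2), w0_eq (n - 3), card_rec n hn]
  push_cast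
  ring
end

section
/- For every k ≥ 2 and n ≥ 6, w(n,k) = w(n-1, k-1) + w(n-2, k), where w(n,k) counts compositions of n with parts in {1,2} having exactly k water cells. -/
namespace Stmt10Aux


lemma getElem_idx {l : List ℕ} {i j : ℕ} (hij : i = j) (hj : j < l.length) :
    l[i]'(hij ▸ hj) = l[j] := by subst hij; rfl

lemma count_one (l : List ℕ) : {i : Fin l.length | l.get i = 1}.ncard = l.count 1 := by
  classical
  rw [Set.ncard_eq_toFinset_card', Set.toFinset_setOf]
  have h := Fin.card_filter_univ_eq_vector_get_eq_count 1 (⟨l, rfl⟩ : List.Vector ℕ l.length)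
  exact h

lemma water_zero {l : List ℕ} (h : l.count 2 ≤ 1) : waterCells l = 0 := by
  unfold waterCells
  have hempty : {i : Fin l.length | l.get i = 1 ∧ (∃ j : Fin l.length, j < i ∧ l.get j = 2) ∧
      (∃ j : Fin l.length, i < j ∧ l.get j = 2)} = ∅ := by
    ext i
    simp only [Set.mem_setOf_eq, Set.mem_empty_iff_false, iff_false]
    rintro ⟨h1, ⟨j1, hj1, hv1⟩, j2, hj2, hv2⟩
    simp only [List.get_eq_getElem] at hv1 hv2
    have hj12 : j1.val < j2.val := lt_trans hj1 hj2
    have h2t : (2:ℕ) ∈ l.take j2.val := by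
      have hlt : j1.val < (l.take j2.val).length := by
        simp only [List.length_take]
        exact lt_min hj12 j1.isLt
      have he : (l.take j2.val)[j1.val] = l[j1.val] := List.getElem_take
      exact List.mem_iff_getElem.mpr ⟨j1.val, hlt, he.trans hv1⟩
    have h2d : (2:ℕ) ∈ l.drop j2.val := by
      have hlt : 0 < (l.drop j2.val).length := by
        simp only [List.length_drop]
        have := j2.isLt; omega
      have he : (l.drop j2.val)[0] = l[j2.val + 0] := List.getElem_drop
      have he2 := he.trans (getElem_idx (Nat.add_zero _) j2.isLt)
      exact List.mem_iff_getElem.mpr ⟨0, hlt, he2.trans hv2⟩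
    have hc : (l.take j2.val ++ l.drop j2.val).count 2 =
        (l.take j2.val).count 2 + (l.drop j2.val).count 2 := List.count_append
    rw [List.take_append_drop] at hc
    have c1 := List.count_pos_iff.mpr h2t
    have c2 := List.count_pos_iff.mpr h2d
    omega
  rw [hempty, Set.ncard_empty]

lemma water_eq (P M S : List ℕ) (hP : 2 ∉ P) (hS : 2 ∉ S) :
    waterCells (P ++ 2 :: M ++ 2 :: S) = M.count 1 := by
  classical
  have hA : (P ++ 2 :: M).length = P.length + 1 + M.length := by simp; omega
  have hlen : (P ++ 2 :: M ++ 2 :: S).length = P.length + 1 + M.length + 1 + S.length := by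
    simp; omega
  have hget_p : ∀ (h2 : P.length < (P ++ 2 :: M ++ 2 :: S).length),
      (P ++ 2 :: M ++ 2 :: S)[P.length] = 2 := by
    intro h2
    rw [List.getElem_append_left (by omega : P.length < (P ++ 2 :: M).length)]
    rw [List.getElem_append_right (le_refl P.length)]
    simp
  have hget_last : ∀ (h2 : P.length + 1 + M.length < (P ++ 2 :: M ++ 2 :: S).length),
      (P ++ 2 :: M ++ 2 :: S)[P.length + 1 + M.length] = 2 := by
    intro h2
    rw [List.getElem_append_right (by omega : (P ++ 2 :: M).length ≤ P.length + 1 + M.length)]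
    rw [getElem_idx (by omega : P.length + 1 + M.length - (P ++ 2 :: M).length = 0)
      (by simp)]
    rfl
  have hget_mid : ∀ (j : ℕ) (hj : j < M.length)
      (h2 : P.length + 1 + j < (P ++ 2 :: M ++ 2 :: S).length),
      (P ++ 2 :: M ++ 2 :: S)[P.length + 1 + j] = M[j] := by
    intro j hj h2
    rw [List.getElem_append_left (by omega : P.length + 1 + j < (P ++ 2 :: M).length)]
    rw [List.getElem_append_right (by omega : P.length ≤ P.length + 1 + j)]
    rw [getElem_idx (by omega : P.length + 1 + j - P.length = j + 1) (by simp; omega)]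
    rw [List.getElem_cons_succ]
  have hget_P : ∀ (i : ℕ) (hi : i < P.length) (h2 : i < (P ++ 2 :: M ++ 2 :: S).length),
      (P ++ 2 :: M ++ 2 :: S)[i] ≠ 2 := by
    intro i hi h2
    rw [List.getElem_append_left (by omega : i < (P ++ 2 :: M).length)]
    rw [List.getElem_append_left hi]
    exact fun hc => hP (hc ▸ List.getElem_mem hi)
  have hget_S : ∀ (i : ℕ) (hi : P.length + 1 + M.length < i)
      (h2 : i < (P ++ 2 :: M ++ 2 :: S).length),
      (P ++ 2 :: M ++ 2 :: S)[i] ≠ 2 := by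
    intro i hi h2
    have hiS : i - (P ++ 2 :: M).length - 1 < S.length := by
      rw [hA]; rw [hlen] at h2; omega
    rw [List.getElem_append_right (by omega : (P ++ 2 :: M).length ≤ i)]
    rw [getElem_idx (by rw [hA]; omega :
      i - (P ++ 2 :: M).length = (i - (P ++ 2 :: M).length - 1) + 1)
      (by simpa using hiS)]
    rw [List.getElem_cons_succ]
    exact fun hc => hS (hc ▸ List.getElem_mem hiS)
  have hMel : ∀ j : Fin M.length, P.length + 1 + j.val < (P ++ 2 :: M ++ 2 :: S).length := by
    intro j; rw [hlen]; have := j.isLt; omega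
  have hset : {i : Fin (P ++ 2 :: M ++ 2 :: S).length |
      (P ++ 2 :: M ++ 2 :: S).get i = 1 ∧
      (∃ j, j < i ∧ (P ++ 2 :: M ++ 2 :: S).get j = 2) ∧
      (∃ j, i < j ∧ (P ++ 2 :: M ++ 2 :: S).get j = 2)} =
      (fun j : Fin M.length =>
        (⟨P.length + 1 + j.val, hMel j⟩ : Fin (P ++ 2 :: M ++ 2 :: S).length)) ''
        {j : Fin M.length | M.get j = 1} := by
    ext i
    simp only [Set.mem_setOf_eq, Set.mem_image, List.get_eq_getElem]
    constructor
    · rintro ⟨h1, ⟨j1, hj1, hv1⟩, j2, hj2, hv2⟩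
      have hilen := i.isLt
      have hlb : P.length < i.val := by
        rcases lt_trichotomy i.val P.length with h | h | h
        · exact absurd hv1 (hget_P j1.val (by have : j1.val < i.val := hj1; omega) j1.isLt)
        · exfalso
          have he := getElem_idx h (h ▸ i.isLt) |>.symm.trans h1
          rw [hget_p (h ▸ i.isLt)] at he
          omega
        · exact h
      have hub : i.val < P.length + 1 + M.length := by
        rcases lt_trichotomy i.val (P.length + 1 + M.length) with h | h | h
        · exact h
        · exfalso
          have he := getElem_idx h (h ▸ i.isLt) |>.symm.trans h1
          rw [hget_last (h ▸ i.isLt)] at he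
          omega
        · exact absurd hv2 (hget_S j2.val (by have : i.val < j2.val := hj2; omega) j2.isLt)
      refine ⟨⟨i.val - P.length - 1, by omega⟩, ?_, ?_⟩
      · show M[i.val - P.length - 1] = 1
        have hm := hget_mid (i.val - P.length - 1) (by omega) (by omega)
        have he := getElem_idx (l := P ++ 2 :: M ++ 2 :: S)
          (by omega : i.val = P.length + 1 + (i.val - P.length - 1)) (by omega)
        exact (hm.symm.trans he.symm).trans h1
      · apply Fin.ext
        show P.length + 1 + (i.val - P.length - 1) = i.val
        omega
    · rintro ⟨j, hj, rfl⟩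
      refine ⟨?_, ⟨⟨P.length, by rw [hlen]; omega⟩, ?_, ?_⟩,
        ⟨P.length + 1 + M.length, by rw [hlen]; omega⟩, ?_, ?_⟩
      · show (P ++ 2 :: M ++ 2 :: S)[P.length + 1 + j.val] = 1
        rw [hget_mid j.val j.isLt (hMel j)]
        exact hj
      · show P.length < P.length + 1 + j.val
        omega
      · exact hget_p _
      · show P.length + 1 + j.val < P.length + 1 + M.length
        have := j.isLt; omega
      · exact hget_last _
  unfold waterCells
  rw [hset, Set.ncard_image_of_injective _ (fun a b hab => by
    apply Fin.ext
    have := congrArg Fin.val hab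
    simp only at this
    omega), count_one]



def ins (v : ℕ) : List ℕ → List ℕ
  | [] => [v]
  | x :: t => if x = 2 then x :: v :: t else x :: ins v t

lemma ins_length (v : ℕ) (l : List ℕ) : (ins v l).length = l.length + 1 := by
  induction l with
  | nil => rfl
  | cons x t ih => simp only [ins]; split <;> simp [ih]

lemma ins_injective (v : ℕ) : Function.Injective (ins v) := by
  intro a
  induction a with
  | nil =>
    intro b h
    cases b with
    | nil => rfl
    | cons x t =>
      have := congrArg List.length h
      rw [ins_length, ins_length] at this
      simp at this
  | cons x t ih =>
    intro b h
    cases b with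
    | nil =>
      have := congrArg List.length h
      rw [ins_length, ins_length] at this
      simp at this
    | cons y s =>
      by_cases hx : x = 2 <;> by_cases hy : y = 2 <;>
        simp only [ins, hx, hy, if_pos, if_neg, if_true, if_false, List.cons.injEq] at h
      · obtain ⟨h1, h2, h3⟩ := h; subst hx hy h3; rfl
      · exact absurd (h.1 ▸ hx) (by simp_all)
      · simp_all
      · obtain ⟨h1, h2⟩ := h; subst h1; rw [ih h2]

lemma ins_sum (v : ℕ) (l : List ℕ) : (ins v l).sum = v + l.sum := by
  induction l with
  | nil => simp [ins]
  | cons x t ih => simp only [ins]; split <;> simp [ih] <;> ring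

lemma ins_parts {v : ℕ} (hv : v = 1 ∨ v = 2) {l : List ℕ} (hl : Parts12 l) :
    Parts12 (ins v l) := by
  induction l with
  | nil => intro x hx; simp [ins] at hx; subst hx; exact hv
  | cons y t ih =>
    intro x hx
    simp only [ins] at hx
    split at hx <;> simp only [List.mem_cons] at hx
    · rcases hx with rfl | rfl | hx
      · exact hl _ (by simp)
      · exact hv
      · exact hl _ (by simp [hx])
    · rcases hx with rfl | hx
      · exact hl _ (by simp)
      · exact ih (fun z hz => hl z (by simp [hz])) _ hx

lemma ins_append {v : ℕ} (P T : List ℕ) (hP : 2 ∉ P) :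
    ins v (P ++ 2 :: T) = P ++ 2 :: v :: T := by
  induction P with
  | nil => simp [ins]
  | cons x t ih =>
    have hx : x ≠ 2 := fun h => hP (by simp [h])
    show (if x = 2 then x :: v :: (t ++ 2 :: T) else x :: ins v (t ++ 2 :: T)) = _
    rw [if_neg hx, ih (fun h => hP (by simp [h]))]
    simp

lemma first_split {l : List ℕ} (h : 2 ∈ l) : ∃ P T, l = P ++ 2 :: T ∧ 2 ∉ P := by
  induction l with
  | nil => simp at h
  | cons x t ih =>
    by_cases hx : x = 2
    · exact ⟨[], t, by simp [hx], by simp⟩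
    · obtain ⟨P, T, hPT, hP⟩ := ih (by rcases List.mem_cons.mp h with h | h; exact absurd h.symm hx; exact h)
      exact ⟨x :: P, T, by simp [hPT], by simp [hP, Ne.symm hx, hx]⟩

lemma exists_decomp {l : List ℕ} (h : 2 ≤ l.count 2) :
    ∃ P M S, l = P ++ 2 :: M ++ 2 :: S ∧ 2 ∉ P ∧ 2 ∉ S := by
  obtain ⟨P, T, rfl, hP⟩ := first_split (l := l) (List.count_pos_iff.mp (by omega))
  have hcT : 1 ≤ T.count 2 := by
    have h1 : (P ++ 2 :: T).count 2 = P.count 2 + (2 :: T).count 2 := List.count_append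
    have hP0 : P.count 2 = 0 := List.count_eq_zero.mpr hP
    rw [h1, hP0, List.count_cons_self] at h
    omega
  have h2T : 2 ∈ T.reverse := by simpa using List.count_pos_iff.mp hcT
  obtain ⟨S', M', hT, hS'⟩ := first_split h2T
  refine ⟨P, M'.reverse, S'.reverse, ?_, hP, by simpa using hS'⟩
  have : T = M'.reverse ++ 2 :: S'.reverse := by
    have := congrArg List.reverse hT
    simpa using this
  simp [this]


lemma first_two_unique : ∀ (P Q T U : List ℕ) (x y : ℕ), 2 ∉ P → 2 ∉ Q →
    P ++ 2 :: x :: T = Q ++ 2 :: y :: U → x = y := by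
  intro P
  induction P with
  | nil =>
    intro Q T U x y _ hQ h
    cases Q with
    | nil => simp at h; exact h.1
    | cons q Q' =>
      exfalso
      simp only [List.nil_append, List.cons_append, List.cons.injEq] at h
      exact hQ (by simp [h.1.symm])
  | cons p P' ih =>
    intro Q T U x y hP hQ h
    cases Q with
    | nil =>
      exfalso
      simp only [List.nil_append, List.cons_append, List.cons.injEq] at h
      exact hP (by simp [h.1])
    | cons q Q' =>
      simp only [List.cons_append, List.cons.injEq] at h
      exact ih Q' T U x y (fun hc => hP (by simp [hc])) (fun hc => hQ (by simp [hc])) h.2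

lemma finite_w (m k' : ℕ) :
    {l : List ℕ | Parts12 l ∧ l.sum = m ∧ waterCells l = k'}.Finite := by
  apply Set.Finite.subset (Set.finite_range (Composition.blocks (n := m)))
  rintro l ⟨hp, hs, -⟩
  exact ⟨⟨l, fun {i} hi => by rcases hp i hi with rfl | rfl <;> omega, hs⟩, rfl⟩

/-- if waterCells ≥ 1 then there are at least two 2's -/
lemma two_twos {l : List ℕ} (h : 1 ≤ waterCells l) : 2 ≤ l.count 2 := by
  by_contra hc
  push_neg at hc
  rw [water_zero (by omega)] at h
  omega

end Stmt10Aux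

theorem stmt10 (k n : ℕ) (hk : 2 ≤ k) (hn : 6 ≤ n) :
    w n k = w (n - 1) (k - 1) + w (n - 2) k := by
  classical
  have key : {l : List ℕ | Parts12 l ∧ l.sum = n ∧ waterCells l = k} =
      Stmt10Aux.ins 1 '' {l : List ℕ | Parts12 l ∧ l.sum = n - 1 ∧ waterCells l = k - 1} ∪
      Stmt10Aux.ins 2 '' {l : List ℕ | Parts12 l ∧ l.sum = n - 2 ∧ waterCells l = k} := by
    ext l
    simp only [Set.mem_setOf_eq, Set.mem_union, Set.mem_image]
    constructor
    · rintro ⟨hp, hs, hw⟩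
      have h2 : 2 ≤ l.count 2 := Stmt10Aux.two_twos (by omega)
      obtain ⟨P, M, S, rfl, hPn, hSn⟩ := Stmt10Aux.exists_decomp h2
      rw [Stmt10Aux.water_eq P M S hPn hSn] at hw
      cases M with
      | nil => simp at hw; omega
      | cons m0 M' =>
        have hm0 : m0 = 1 ∨ m0 = 2 := hp m0 (by simp)
        have hsum : P.sum + 2 + m0 + M'.sum + 2 + S.sum = n := by
          simp only [List.sum_append, List.sum_cons] at hs
          omega
        have hcnt : (m0 :: M').count 1 = k := hw
        cases hm0 with
        | inl hm1 =>
          subst hm1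
          left
          refine ⟨P ++ 2 :: M' ++ 2 :: S, ⟨?_, ?_, ?_⟩, ?_⟩
          · intro x hx
            apply hp
            simp only [List.mem_append, List.mem_cons] at hx ⊢
            tauto
          · simp only [List.sum_append, List.sum_cons]
            omega
          · rw [Stmt10Aux.water_eq P M' S hPn hSn]
            rw [List.count_cons] at hcnt
            simp at hcnt
            omega
          · have hd : P ++ 2 :: M' ++ 2 :: S = P ++ 2 :: (M' ++ 2 :: S) := by
              simp [List.append_assoc]
            rw [hd, Stmt10Aux.ins_append P _ hPn]
            simp [List.append_assoc]
        | inr hm2 =>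
          subst hm2
          right
          refine ⟨P ++ 2 :: M' ++ 2 :: S, ⟨?_, ?_, ?_⟩, ?_⟩
          · intro x hx
            apply hp
            simp only [List.mem_append, List.mem_cons] at hx ⊢
            tauto
          · simp only [List.sum_append, List.sum_cons]
            omega
          · rw [Stmt10Aux.water_eq P M' S hPn hSn]
            rw [List.count_cons] at hcnt
            simp at hcnt
            omega
          · have hd : P ++ 2 :: M' ++ 2 :: S = P ++ 2 :: (M' ++ 2 :: S) := by
              simp [List.append_assoc]
            rw [hd, Stmt10Aux.ins_append P _ hPn]
            simp [List.append_assoc]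
    · rintro (⟨b, ⟨hbp, hbs, hbw⟩, rfl⟩ | ⟨c, ⟨hcp, hcs, hcw⟩, rfl⟩)
      · have h2 : 2 ≤ b.count 2 := Stmt10Aux.two_twos (by omega)
        obtain ⟨P, M, S, rfl, hPn, hSn⟩ := Stmt10Aux.exists_decomp h2
        rw [Stmt10Aux.water_eq P M S hPn hSn] at hbw
        have hd : P ++ 2 :: M ++ 2 :: S = P ++ 2 :: (M ++ 2 :: S) := by
          simp [List.append_assoc]
        have hform : P ++ 2 :: 1 :: (M ++ 2 :: S) = P ++ 2 :: (1 :: M) ++ 2 :: S := by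
          simp [List.append_assoc]
        refine ⟨Stmt10Aux.ins_parts (Or.inl rfl) hbp, ?_, ?_⟩
        · rw [Stmt10Aux.ins_sum, hbs]
          omega
        · rw [hd, Stmt10Aux.ins_append P _ hPn, hform,
            Stmt10Aux.water_eq P (1 :: M) S hPn hSn, List.count_cons]
          simp
          omega
      · have h2 : 2 ≤ c.count 2 := Stmt10Aux.two_twos (by omega)
        obtain ⟨P, M, S, rfl, hPn, hSn⟩ := Stmt10Aux.exists_decomp h2
        rw [Stmt10Aux.water_eq P M S hPn hSn] at hcw
        have hd : P ++ 2 :: M ++ 2 :: S = P ++ 2 :: (M ++ 2 :: S) := by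
          simp [List.append_assoc]
        have hform : P ++ 2 :: 2 :: (M ++ 2 :: S) = P ++ 2 :: (2 :: M) ++ 2 :: S := by
          simp [List.append_assoc]
        refine ⟨Stmt10Aux.ins_parts (Or.inr rfl) hcp, ?_, ?_⟩
        · rw [Stmt10Aux.ins_sum, hcs]
          omega
        · rw [hd, Stmt10Aux.ins_append P _ hPn, hform,
            Stmt10Aux.water_eq P (2 :: M) S hPn hSn, List.count_cons]
          simp
          omega
  have hBfin := Stmt10Aux.finite_w (n - 1) (k - 1)
  have hCfin := Stmt10Aux.finite_w (n - 2) k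
  have hdisj : Disjoint
      (Stmt10Aux.ins 1 '' {l : List ℕ | Parts12 l ∧ l.sum = n - 1 ∧ waterCells l = k - 1})
      (Stmt10Aux.ins 2 '' {l : List ℕ | Parts12 l ∧ l.sum = n - 2 ∧ waterCells l = k}) := by
    rw [Set.disjoint_left]
    rintro l ⟨b, ⟨hbp, hbs, hbw⟩, rfl⟩ ⟨c, ⟨hcp, hcs, hcw⟩, hlc⟩
    have h2b : 2 ≤ b.count 2 := Stmt10Aux.two_twos (by omega)
    have h2c : 2 ≤ c.count 2 := Stmt10Aux.two_twos (by omega)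
    obtain ⟨P, M, S, rfl, hPn, hSn⟩ := Stmt10Aux.exists_decomp h2b
    obtain ⟨Q, N, T, rfl, hQn, hTn⟩ := Stmt10Aux.exists_decomp h2c
    have hdP : P ++ 2 :: M ++ 2 :: S = P ++ 2 :: (M ++ 2 :: S) := by
      simp [List.append_assoc]
    have hdQ : Q ++ 2 :: N ++ 2 :: T = Q ++ 2 :: (N ++ 2 :: T) := by
      simp [List.append_assoc]
    rw [hdP, Stmt10Aux.ins_append P _ hPn] at hlc
    rw [hdQ, Stmt10Aux.ins_append Q _ hQn] at hlc
    exact absurd (Stmt10Aux.first_two_unique Q P (N ++ 2 :: T) (M ++ 2 :: S) 2 1 hQn hPn hlc)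
      (by norm_num)
  show {l : List ℕ | Parts12 l ∧ l.sum = n ∧ waterCells l = k}.ncard = _
  rw [key, Set.ncard_union_eq hdisj (hBfin.image _) (hCfin.image _),
    Set.ncard_image_of_injective _ (Stmt10Aux.ins_injective 1),
    Set.ncard_image_of_injective _ (Stmt10Aux.ins_injective 2)]
  rfl
end

section
/- For every m ≥ 1, the number of compositions of 2m-1 with all internal parts even is 2^m - 1, and the number of compositions of 2m with all internal parts even is 3·2^{m-1} - 1. -/
namespace AuxEven

/-- Finset of all compositions of `n` (lists of positive naturals summing to `n`). -/
def F : ℕ → Finset (List ℕ)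
  | 0 => {[]}
  | n + 1 =>
    (Finset.range (n + 1)).attach.biUnion
      (fun i => (F i.1).image (List.cons (n + 1 - i.1)))
  decreasing_by exact Finset.mem_range.mp i.2

lemma mem_F : ∀ (n : ℕ) (l : List ℕ), l ∈ F n ↔ (∀ x ∈ l, 0 < x) ∧ l.sum = n := by
  intro n
  induction n using Nat.strong_induction_on with
  | _ n ih =>
    match n with
    | 0 =>
      intro l
      simp only [F, Finset.mem_singleton]
      constructor
      · rintro rfl; simp
      · rintro ⟨hpos, hsum⟩
        cases l with
        | nil => rfl
        | cons a r =>
          exfalso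
          have := hpos a (by simp)
          simp only [List.sum_cons] at hsum
          omega
    | n + 1 =>
      intro l
      simp only [F, Finset.mem_biUnion, Finset.mem_attach, Finset.mem_image, true_and,
        Subtype.exists, Finset.mem_range]
      constructor
      · rintro ⟨i, hi, r, hr, rfl⟩
        rw [ih i hi] at hr
        obtain ⟨hpos, hsum⟩ := hr
        refine ⟨?_, ?_⟩
        · intro x hx
          rcases List.mem_cons.mp hx with h | h
          · omega
          · exact hpos x h
        · simp only [List.sum_cons, hsum]; omega
      · rintro ⟨hpos, hsum⟩
        cases l with
        | nil => simp at hsum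
        | cons a r =>
          have ha : 0 < a := hpos a (by simp)
          simp only [List.sum_cons] at hsum
          refine ⟨r.sum, by omega, r, ?_, ?_⟩
          · rw [ih r.sum (by omega)]
            exact ⟨fun x hx => hpos x (List.mem_cons_of_mem _ hx), rfl⟩
          · congr 1; omega

/-- Compositions of `n` with all parts except possibly the last one even. -/
def CC (n : ℕ) : Finset (List ℕ) := (F n).filter (fun r => ∀ x ∈ r.dropLast, Even x)

def cc (n : ℕ) : ℕ := (CC n).card

lemma mem_CC {n : ℕ} {l : List ℕ} :
    l ∈ CC n ↔ (∀ x ∈ l, 0 < x) ∧ l.sum = n ∧ ∀ x ∈ l.dropLast, Even x := by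
  simp only [CC, Finset.mem_filter, mem_F]
  tauto

lemma CC_zero : CC 0 = {[]} := by
  ext l
  simp only [mem_CC, Finset.mem_singleton]
  constructor
  · rintro ⟨hpos, hsum, -⟩
    cases l with
    | nil => rfl
    | cons a r =>
      have := hpos a (by simp)
      simp only [List.sum_cons] at hsum
      omega
  · rintro rfl; simp

lemma CC_one : CC 1 = {[1]} := by
  ext l
  simp only [mem_CC, Finset.mem_singleton]
  constructor
  · rintro ⟨hpos, hsum, -⟩
    match l with
    | [] => simp at hsum
    | [a] => simp only [List.sum_cons, List.sum_nil] at hsum; simp; omega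
    | a :: b :: r =>
      have ha := hpos a (by simp)
      have hb := hpos b (by simp)
      simp only [List.sum_cons] at hsum
      omega
  · rintro rfl
    refine ⟨by simp, by simp, by simp⟩

lemma CC_two : CC 2 = {[2]} := by
  ext l
  simp only [mem_CC, Finset.mem_singleton]
  constructor
  · rintro ⟨hpos, hsum, heven⟩
    match l with
    | [] => simp at hsum
    | [a] => simp only [List.sum_cons, List.sum_nil] at hsum; simp; omega
    | [a, b] =>
      have ha := hpos a (by simp)
      have hb := hpos b (by simp)
      have hea : Even a := heven a (by simp)
      rw [Nat.even_iff] at hea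
      simp only [List.sum_cons, List.sum_nil] at hsum
      omega
    | a :: b :: c :: r =>
      have ha := hpos a (by simp)
      have hb := hpos b (by simp)
      have hc := hpos c (by simp)
      simp only [List.sum_cons] at hsum
      omega
  · rintro rfl
    refine ⟨by simp, by simp, by simp⟩

/-- Add 2 to the head of a list. -/
def bump : List ℕ → List ℕ
  | [] => []
  | a :: r => (a + 2) :: r

lemma CC_rec_eq (n : ℕ) :
    CC (n + 3) = ((CC (n + 1)).image (List.cons 2)) ∪ ((CC (n + 1)).image bump) := by
  ext l
  simp only [Finset.mem_union, Finset.mem_image]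
  constructor
  · intro hl
    obtain ⟨hpos, hsum, heven⟩ := mem_CC.mp hl
    match l with
    | [] => simp at hsum
    | [a] =>
      simp only [List.sum_cons, List.sum_nil] at hsum
      right
      refine ⟨[n + 1], mem_CC.mpr ⟨by simp, by simp, by simp⟩, ?_⟩
      simp only [bump]
      congr 1
      omega
    | a :: b :: r =>
      have hea : Even a := heven a (by simp [List.dropLast])
      have ha := hpos a (by simp)
      rw [Nat.even_iff] at hea
      simp only [List.sum_cons] at hsum
      by_cases h2 : a = 2
      · left
        subst h2
        refine ⟨b :: r, mem_CC.mpr ⟨?_, ?_, ?_⟩, rfl⟩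
        · intro x hx; exact hpos x (by simp [hx])
        · simp only [List.sum_cons]; omega
        · intro x hx
          exact heven x (by simp [List.dropLast_cons₂, hx])
      · right
        have ha4 : 4 ≤ a := by omega
        refine ⟨(a - 2) :: b :: r, mem_CC.mpr ⟨?_, ?_, ?_⟩, ?_⟩
        · intro x hx
          rcases List.mem_cons.mp hx with h | h
          · omega
          · exact hpos x (by simp [h])
        · simp only [List.sum_cons]; omega
        · intro x hx
          rw [List.dropLast_cons₂] at hx
          rcases List.mem_cons.mp hx with h | h
          · subst h; rw [Nat.even_iff]; omega
          · exact heven x (by simp [List.dropLast_cons₂, h])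
        · simp only [bump]; congr 1; omega
  · rintro (⟨r, hr, rfl⟩ | ⟨q, hq, rfl⟩)
    · obtain ⟨hpos, hsum, heven⟩ := mem_CC.mp hr
      refine mem_CC.mpr ⟨?_, ?_, ?_⟩
      · intro x hx
        rcases List.mem_cons.mp hx with h | h
        · omega
        · exact hpos x h
      · simp only [List.sum_cons]; omega
      · cases r with
        | nil => simp
        | cons b r' =>
          intro x hx
          rw [List.dropLast_cons₂] at hx
          rcases List.mem_cons.mp hx with h | h
          · subst h; exact even_two
          · exact heven x h
    · obtain ⟨hpos, hsum, heven⟩ := mem_CC.mp hq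
      match q with
      | [] => simp at hsum
      | a :: r =>
        simp only [bump]
        refine mem_CC.mpr ⟨?_, ?_, ?_⟩
        · intro x hx
          rcases List.mem_cons.mp hx with h | h
          · omega
          · exact hpos x (by simp [h])
        · simp only [List.sum_cons] at hsum ⊢; omega
        · cases r with
          | nil => simp
          | cons b r' =>
            intro x hx
            rw [List.dropLast_cons₂] at hx
            have hea : Even a := heven a (by simp [List.dropLast_cons₂])
            rcases List.mem_cons.mp hx with h | h
            · subst h
              rw [Nat.even_iff] at hea ⊢; omega
            · exact heven x (by simp [List.dropLast_cons₂, h])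

lemma cc_rec (n : ℕ) : cc (n + 3) = 2 * cc (n + 1) := by
  have hdisj : Disjoint ((CC (n + 1)).image (List.cons 2)) ((CC (n + 1)).image bump) := by
    rw [Finset.disjoint_left]
    rintro x hx hy
    obtain ⟨r, hr, rfl⟩ := Finset.mem_image.mp hx
    obtain ⟨q, hq, hqe⟩ := Finset.mem_image.mp hy
    obtain ⟨hpos, hsum, -⟩ := mem_CC.mp hq
    match q with
    | [] => simp at hsum
    | a :: r' =>
      have := hpos a (by simp)
      simp only [bump] at hqe
      simp only [List.cons.injEq] at hqe
      omega
  rw [cc, CC_rec_eq, Finset.card_union_of_disjoint hdisj,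
    Finset.card_image_of_injective _ (List.cons_injective),
    Finset.card_image_of_injOn]
  · ring_nf; rfl
  · intro q1 h1 q2 h2 he
    obtain ⟨hp1, hs1, -⟩ := mem_CC.mp h1
    obtain ⟨hp2, hs2, -⟩ := mem_CC.mp h2
    match q1, q2 with
    | [], _ => simp at hs1
    | _, [] => simp at hs2
    | a :: r, b :: s =>
      simp only [bump, List.cons.injEq] at he
      obtain ⟨h, rfl⟩ := he
      have : a = b := by omega
      rw [this]

lemma cc_vals : ∀ u : ℕ, cc (2 * u + 1) = 2 ^ u ∧ cc (2 * u + 2) = 2 ^ u := by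
  intro u
  induction u with
  | zero =>
    constructor
    · show (CC 1).card = 1
      rw [CC_one]; rfl
    · show (CC 2).card = 1
      rw [CC_two]; rfl
  | succ k ih =>
    constructor
    · have h : 2 * (k + 1) + 1 = (2 * k + 1) + 2 := by ring
      rw [h]
      have := cc_rec (2 * k)
      rw [show 2 * k + 3 = 2 * k + 1 + 2 from rfl] at this
      rw [this, ih.1]; ring
    · have h : 2 * (k + 1) + 2 = (2 * k + 2) + 2 := by ring
      rw [h]
      have := cc_rec (2 * k + 1)
      rw [show 2 * k + 1 + 3 = 2 * k + 2 + 2 from rfl] at this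
      rw [this, ih.2]; ring

/-- Compositions of `n` with all internal parts even. -/
def AA (n : ℕ) : Finset (List ℕ) :=
  (F n).filter (fun l => ∀ x ∈ (l.drop 1).dropLast, Even x)

lemma mem_AA {n : ℕ} {l : List ℕ} :
    l ∈ AA n ↔ IsComposition n l ∧ InternalEven l := by
  simp only [AA, Finset.mem_filter, mem_F, IsComposition, InternalEven, and_assoc]

lemma AA_eq (n : ℕ) :
    AA (n + 1) = (Finset.range (n + 1)).biUnion
      (fun i => (CC i).image (List.cons (n + 1 - i))) := by
  ext l
  simp only [Finset.mem_biUnion, Finset.mem_range, Finset.mem_image, mem_AA,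
    IsComposition, InternalEven]
  constructor
  · rintro ⟨⟨hpos, hsum⟩, hint⟩
    match l with
    | [] => simp at hsum
    | a :: r =>
      have ha := hpos a (by simp)
      simp only [List.sum_cons] at hsum
      refine ⟨r.sum, by omega, r, mem_CC.mpr ⟨?_, rfl, ?_⟩, ?_⟩
      · intro x hx; exact hpos x (by simp [hx])
      · intro x hx; exact hint x (by simpa using hx)
      · congr 1; omega
  · rintro ⟨i, hi, r, hr, rfl⟩
    obtain ⟨hpos, hsum, heven⟩ := mem_CC.mp hr
    refine ⟨⟨?_, ?_⟩, ?_⟩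
    · intro x hx
      rcases List.mem_cons.mp hx with h | h
      · omega
      · exact hpos x h
    · simp only [List.sum_cons, hsum]; omega
    · intro x hx
      exact heven x (by simpa using hx)

lemma AA_card (n : ℕ) :
    (AA (n + 1)).card = ∑ i ∈ Finset.range (n + 1), cc i := by
  rw [AA_eq, Finset.card_biUnion]
  · refine Finset.sum_congr rfl (fun i _ => ?_)
    exact Finset.card_image_of_injective _ (List.cons_injective)
  · intro i hi j hj hij
    simp only [Finset.coe_range, Set.mem_Iio, Function.onFun] at hi hj ⊢
    rw [Finset.disjoint_left]
    rintro x hx hy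
    obtain ⟨r, -, rfl⟩ := Finset.mem_image.mp hx
    obtain ⟨s, -, he⟩ := Finset.mem_image.mp hy
    have : n + 1 - j = n + 1 - i := (List.cons.injEq _ _ _ _ ▸ he).1
    omega

lemma sum_cc (k : ℕ) : (∑ s ∈ Finset.range (2 * k + 1), cc s) = 2 ^ (k + 1) - 1 := by
  induction k with
  | zero =>
    show (∑ s ∈ Finset.range 1, cc s) = 1
    rw [Finset.sum_range_one]
    show (CC 0).card = 1
    rw [CC_zero]; rfl
  | succ k ih =>
    have h : 2 * (k + 1) + 1 = (2 * k + 1) + 1 + 1 := by ring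
    rw [h, Finset.sum_range_succ, Finset.sum_range_succ, ih]
    have h1 := (cc_vals k).1
    have h2 : cc (2 * k + 1 + 1) = 2 ^ k := by
      rw [show 2 * k + 1 + 1 = 2 * k + 2 from rfl]; exact (cc_vals k).2
    rw [h1, h2]
    have hp : 1 ≤ 2 ^ (k + 1) := Nat.one_le_two_pow
    have e1 : (2 : ℕ) ^ (k + 1) = 2 * 2 ^ k := by rw [pow_succ]; ring
    have e2 : (2 : ℕ) ^ (k + 2) = 2 * 2 ^ (k + 1) := by rw [pow_succ]; ring
    omega

end AuxEven

theorem stmt12 (m : ℕ) (hm : 1 ≤ m) :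
    {l : List ℕ | IsComposition (2 * m - 1) l ∧ InternalEven l}.ncard = 2 ^ m - 1 ∧
    {l : List ℕ | IsComposition (2 * m) l ∧ InternalEven l}.ncard = 3 * 2 ^ (m - 1) - 1 := by
  obtain ⟨k, rfl⟩ : ∃ k, m = k + 1 := ⟨m - 1, by omega⟩
  have e1 : {l : List ℕ | IsComposition (2 * (k + 1) - 1) l ∧ InternalEven l}
      = ↑(AuxEven.AA (2 * k + 1)) := by
    ext l
    rw [show 2 * (k + 1) - 1 = 2 * k + 1 from by omega]
    simp only [Set.mem_setOf_eq, Finset.coe_sort_coe, Finset.mem_coe, AuxEven.mem_AA]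
  have e2 : {l : List ℕ | IsComposition (2 * (k + 1)) l ∧ InternalEven l}
      = ↑(AuxEven.AA (2 * k + 2)) := by
    ext l
    rw [show 2 * (k + 1) = 2 * k + 2 from by ring]
    simp only [Set.mem_setOf_eq, Finset.mem_coe, AuxEven.mem_AA]
  rw [e1, e2, Set.ncard_coe_finset, Set.ncard_coe_finset]
  have c1 : (AuxEven.AA (2 * k + 1)).card = 2 ^ (k + 1) - 1 := by
    rw [show 2 * k + 1 = 2 * k + 1 from rfl, AuxEven.AA_card, AuxEven.sum_cc]
  have c2 : (AuxEven.AA (2 * k + 2)).card = 3 * 2 ^ k - 1 := by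
    rw [show 2 * k + 2 = (2 * k + 1) + 1 from rfl, AuxEven.AA_card, Finset.sum_range_succ,
      AuxEven.sum_cc, (AuxEven.cc_vals k).1]
    have hp : 1 ≤ 2 ^ (k + 1) := Nat.one_le_two_pow
    have e : (2 : ℕ) ^ (k + 1) = 2 * 2 ^ k := by rw [pow_succ]; ring
    omega
  refine ⟨c1, by rw [c2]; congr 1⟩
end
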